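/- arXiv:2012.07937 — 6 statements merged into one kernel-verified Lean document; each statement's English description precedes it below -/
import Mathlib

section
/- Let f : ℝ → ℝ be Lipschitz and 1-periodic, let φ be a bounded probability density with CDF Φ, and set Φ₂(t) := ∫ Φ(t+z)φ(z) dz and g(y) := ∫_0^1 Φ₂(y − f(x)) dx. Define M(θ) := ∫_0^1 g(f(t)) f(t−θ) dt. Then M is differentiable with M'(θ) = −∫_0^1 g(f(t+θ)) f'(t) dt (where f' denotes the almost-everywhere derivative of f), and M'(0) = 0. -/
open MeasureTheory Set

private lemma ae_shift {Q : ℝ → Prop} (h : ∀ᵐ x, Q x) (c : ℝ) :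
    ∀ᵐ (x : ℝ), Q (x + c) := by
  rw [MeasureTheory.ae_iff] at h ⊢
  rw [show {x : ℝ | ¬ Q (x + c)} = (fun x : ℝ => x + c) ⁻¹' {x | ¬ Q x} from rfl,
    measure_preimage_add_right]
  exact h

theorem M_differentiable_and_critical_at_zero
    (f f' φ Φ Φ₂ g M : ℝ → ℝ) (L : NNReal)
    (hf : LipschitzWith L f)
    (hper : ∀ x, f (x + 1) = f x)
    (hf' : ∀ᵐ x, HasDerivAt f (f' x) x)
    (hφmeas : Measurable φ)
    (hφnonneg : ∀ z, 0 ≤ φ z)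
    (hφint : Integrable φ)
    (hφone : ∫ z, φ z = 1)
    (hφbdd : BddAbove (Set.range φ))
    (hΦ : ∀ t, Φ t = ∫ z in Set.Iic t, φ z)
    (hΦ₂ : ∀ t, Φ₂ t = ∫ z, Φ (t + z) * φ z)
    (hg : ∀ y, g y = ∫ x in (0:ℝ)..1, Φ₂ (y - f x))
    (hM : ∀ θ, M θ = ∫ t in (0:ℝ)..1, g (f t) * f (t - θ)) :
    (∀ θ, HasDerivAt M (-(∫ t in (0:ℝ)..1, g (f (t + θ)) * f' t)) θ) ∧
    (-(∫ t in (0:ℝ)..1, g (f t) * f' t)) = 0 := by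
  have hperf : Function.Periodic f 1 := hper
  have hperZ : ∀ (n : ℤ) (x : ℝ), f (x + n) = f x := by
    intro n x
    simpa using (hperf.int_mul n) x
  -- g is Lipschitz
  obtain ⟨K, hKg⟩ : ∃ K : NNReal, LipschitzWith K g := by
    set K0 : ℝ := sSup (range φ) with hK0
    have hφle : ∀ z, φ z ≤ K0 := fun z => le_csSup hφbdd (mem_range_self z)
    have hK0nn : 0 ≤ K0 := (hφnonneg 0).trans (hφle 0)
    refine ⟨⟨K0, hK0nn⟩, ?_⟩
    have hΦlip : LipschitzWith ⟨K0, hK0nn⟩ Φ := by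
      apply LipschitzWith.of_dist_le_mul
      intro a b
      have h1 : Φ a - Φ b = ∫ x in b..a, φ x := by
        rw [hΦ a, hΦ b, intervalIntegral.integral_Iic_sub_Iic hφint.integrableOn
          hφint.integrableOn]
      rw [Real.dist_eq, Real.dist_eq, h1]
      have := intervalIntegral.norm_integral_le_of_norm_le_const (a := b) (b := a)
        (C := K0) (f := φ) (fun x _ => by
          rw [Real.norm_eq_abs, abs_of_nonneg (hφnonneg x)]; exact hφle x)
      rw [Real.norm_eq_abs] at this; exact this
    have hΦ0 : ∀ t, 0 ≤ Φ t := by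
      intro t
      rw [hΦ]
      exact setIntegral_nonneg measurableSet_Iic fun z _ => hφnonneg z
    have hΦ1 : ∀ t, Φ t ≤ 1 := by
      intro t
      rw [hΦ, ← hφone]
      exact setIntegral_le_integral hφint (Filter.Eventually.of_forall hφnonneg)
    have hint : ∀ t : ℝ, Integrable (fun z => Φ (t + z) * φ z) := by
      intro t
      refine Integrable.mono hφint
        ((hΦlip.continuous.comp (continuous_const.add continuous_id)).aestronglyMeasurable.mul
          hφmeas.aestronglyMeasurable) ?_
      refine Filter.Eventually.of_forall fun z => ?_
      rw [Real.norm_eq_abs, Real.norm_eq_abs, abs_mul, abs_of_nonneg (hφnonneg z),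
        abs_of_nonneg (hΦ0 _)]
      nlinarith [hΦ1 (t + z), hφnonneg z, hΦ0 (t + z)]
    have hΦ₂lip : LipschitzWith ⟨K0, hK0nn⟩ Φ₂ := by
      apply LipschitzWith.of_dist_le_mul
      intro a b
      rw [Real.dist_eq, Real.dist_eq, hΦ₂ a, hΦ₂ b, ← integral_sub (hint a) (hint b)]
      calc |∫ z, (Φ (a + z) * φ z - Φ (b + z) * φ z)|
          ≤ ∫ z, ‖Φ (a + z) * φ z - Φ (b + z) * φ z‖ := by
            simpa [Real.norm_eq_abs] using
              norm_integral_le_integral_norm (fun z => Φ (a + z) * φ z - Φ (b + z) * φ z)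
        _ ≤ ∫ z, K0 * |a - b| * φ z := by
            refine integral_mono (((hint a).sub (hint b)).norm) ((hφint.const_mul _)) ?_
            intro z
            have hd := hΦlip.dist_le_mul (a + z) (b + z)
            simp only [Real.dist_eq, NNReal.coe_mk, add_sub_add_right_eq_sub] at hd
            show ‖Φ (a + z) * φ z - Φ (b + z) * φ z‖ ≤ K0 * |a - b| * φ z
            rw [Real.norm_eq_abs, ← sub_mul, abs_mul, abs_of_nonneg (hφnonneg z)]
            exact mul_le_mul_of_nonneg_right hd (hφnonneg z)
        _ = K0 * |a - b| := by rw [integral_const_mul, hφone, mul_one]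
    apply LipschitzWith.of_dist_le_mul
    intro a b
    have hcont : ∀ y : ℝ, Continuous fun x => Φ₂ (y - f x) :=
      fun y => hΦ₂lip.continuous.comp (continuous_const.sub hf.continuous)
    rw [Real.dist_eq, Real.dist_eq, hg a, hg b,
      ← intervalIntegral.integral_sub ((hcont a).intervalIntegrable _ _)
        ((hcont b).intervalIntegrable _ _)]
    have := intervalIntegral.norm_integral_le_of_norm_le_const (a := (0:ℝ)) (b := 1)
      (C := K0 * |a - b|) (f := fun x => Φ₂ (a - f x) - Φ₂ (b - f x)) (fun x _ => by
        have hd := hΦ₂lip.dist_le_mul (a - f x) (b - f x)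
        simp only [Real.dist_eq, NNReal.coe_mk, sub_sub_sub_cancel_right] at hd
        rw [Real.norm_eq_abs]; exact hd)
    simp only [Real.norm_eq_abs, sub_zero, abs_one, mul_one] at this; exact this
  have hcontf : Continuous f := hf.continuous
  have hcont_h : Continuous fun t => g (f t) := hKg.continuous.comp hcontf
  -- a.e. facts about f'
  have hf'ae : f' =ᵐ[volume] deriv f := hf'.mono fun x hx => (hx.deriv).symm
  have hkey : ∀ᵐ u : ℝ, ∀ n : ℤ, f' (u + n) = f' u := by
    rw [MeasureTheory.ae_all_iff]
    intro n
    filter_upwards [hf', ae_shift hf' (n : ℝ)] with u hu hun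
    have h2 : HasDerivAt (fun x : ℝ => f (x + (n : ℝ))) (f' (u + n)) u := by
      have := hun.comp u ((hasDerivAt_id u).add_const (n : ℝ))
      rw [mul_one] at this; exact this
    have h3 : HasDerivAt f (f' (u + n)) u := by
      have he : (fun x : ℝ => f (x + (n : ℝ))) = f := funext fun x => hperZ n x
      rwa [he] at h2
    exact h3.unique hu
  have hpf' : (fun u => f' (Int.fract u)) =ᵐ[volume] f' := by
    filter_upwards [hkey] with u hu
    have he : Int.fract u = u + ((-⌊u⌋ : ℤ) : ℝ) := by
      rw [Int.fract]; push_cast; ring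
    show f' (Int.fract u) = f' u
    rw [he, hu (-⌊u⌋)]
  -- Part 1
  have part1 : ∀ θ, HasDerivAt M (-(∫ t in (0:ℝ)..1, g (f (t + θ)) * f' t)) θ := by
    intro θ
    have key := hasDerivAt_integral_of_dominated_loc_of_lip
      (μ := volume.restrict (Ioc (0:ℝ) 1))
      (F := fun θ' t => g (f t) * f (t - θ'))
      (F' := fun t => -(g (f t) * f' (t - θ)))
      (x₀ := θ) (bound := fun t => |g (f t)| * L)
      (Filter.univ_mem (f := nhds θ))
      (Filter.Eventually.of_forall fun θ' =>
        (hcont_h.mul (hcontf.comp (continuous_id.sub continuous_const))).aestronglyMeasurable)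
      ((hcont_h.mul (hcontf.comp (continuous_id.sub continuous_const))).integrableOn_Ioc)
      ?_ ?_
      (((hcont_h.abs.mul continuous_const).integrableOn_Ioc))
      ?_
    · -- conclude
      have hMeq : M = fun θ' => ∫ t, g (f t) * f (t - θ') ∂(volume.restrict (Ioc (0:ℝ) 1)) := by
        funext θ'
        rw [hM θ', intervalIntegral.integral_of_le zero_le_one]
      have hd := key.2
      rw [← hMeq] at hd
      have hval : (∫ t, -(g (f t) * f' (t - θ)) ∂(volume.restrict (Ioc (0:ℝ) 1)))
          = -(∫ t in (0:ℝ)..1, g (f (t + θ)) * f' t) := by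
        rw [integral_neg]
        congr 1
        rw [← intervalIntegral.integral_of_le zero_le_one]
        set P : ℝ → ℝ := fun u => g (f (u + θ)) * f' (Int.fract u) with hP
        have hPper : Function.Periodic P 1 := by
          intro u
          simp only [hP]
          rw [Int.fract_add_one]
          congr 2
          rw [add_right_comm, hper]
        have e1 : (∫ t in (0:ℝ)..1, g (f t) * f' (t - θ)) = ∫ t in (0:ℝ)..1, P (t - θ) := by
          apply intervalIntegral.integral_congr_ae
          have hs := ae_shift hpf' (-θ)
          filter_upwards [hs] with t ht _
          simp only [hP]
          have : t - θ + θ = t := by ring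
          rw [this]
          congr 1
          simpa [sub_eq_add_neg] using ht.symm
        have e2 : (∫ t in (0:ℝ)..1, P (t - θ)) = ∫ u in (0:ℝ) - θ..1 - θ, P u :=
          intervalIntegral.integral_comp_sub_right P θ
        have e3 : (∫ u in (0:ℝ) - θ..1 - θ, P u) = ∫ u in (0:ℝ)..1, P u := by
          have := hPper.intervalIntegral_add_eq (-θ) 0
          simpa [zero_sub, sub_eq_add_neg, add_comm, zero_add] using this
        have e4 : (∫ u in (0:ℝ)..1, P u) = ∫ u in (0:ℝ)..1, g (f (u + θ)) * f' u := by
          apply intervalIntegral.integral_congr_ae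
          filter_upwards [hpf'] with u hu _
          simp only [hP]
          rw [hu]
        rw [e1, e2, e3, e4]
      rwa [hval] at hd
    · -- F' measurable
      have h1 : ∀ᵐ t : ℝ, f' (t - θ) = deriv f (t - θ) := by
        have := ae_shift (hf'ae : ∀ᵐ x, f' x = deriv f x) (-θ)
        simpa [sub_eq_add_neg] using this
      have h2 : AEStronglyMeasurable (fun t : ℝ => -(g (f t) * deriv f (t - θ))) volume :=
        ((hcont_h.measurable.mul ((measurable_deriv f).comp
          (measurable_id.sub_const θ))).neg).aestronglyMeasurable
      exact (h2.congr (h1.mono fun t ht => by rw [ht])).restrict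
    · -- Lipschitz
      refine Filter.Eventually.of_forall fun t => ?_
      have hl : LipschitzWith (Real.nnabs (|g (f t)| * L))
          (fun θ' : ℝ => g (f t) * f (t - θ')) := by
        apply LipschitzWith.of_dist_le_mul
        intro a b
        rw [Real.dist_eq, Real.dist_eq, ← mul_sub, abs_mul]
        have hd : |f (t - a) - f (t - b)| ≤ L * |a - b| := by
          have := hf.dist_le_mul (t - a) (t - b)
          rw [Real.dist_eq, Real.dist_eq] at this
          calc |f (t - a) - f (t - b)| ≤ L * |t - a - (t - b)| := this
            _ = L * |a - b| := by rw [show t - a - (t - b) = -(a - b) by ring, abs_neg]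
        calc |g (f t)| * |f (t - a) - f (t - b)| ≤ |g (f t)| * (L * |a - b|) :=
              mul_le_mul_of_nonneg_left hd (abs_nonneg _)
          _ = (Real.nnabs (|g (f t)| * L) : ℝ) * |a - b| := by
              have he : (Real.nnabs (|g (f t)| * L) : ℝ) = |g (f t)| * L := by
                rw [Real.coe_nnabs]; exact abs_of_nonneg (by positivity)
              rw [he]; ring
      exact hl.lipschitzOnWith
    · -- a.e. differentiability in θ
      refine ae_restrict_of_ae ?_
      filter_upwards [ae_shift hf' (-θ)] with t ht
      have ht' : HasDerivAt f (f' (t - θ)) (t - θ) := by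
        simpa [sub_eq_add_neg] using ht
      have h1 : HasDerivAt (fun θ' : ℝ => t - θ') (-1) θ := by
        simpa using (hasDerivAt_id θ).const_sub t
      have h2 : HasDerivAt (fun θ' : ℝ => f (t - θ')) (f' (t - θ) * (-1)) θ :=
        HasDerivAt.comp θ ht' h1
      have h3 := h2.const_mul (g (f t))
      exact h3.congr_deriv (by ring)
  refine ⟨part1, ?_⟩
  -- Part 2
  have part2 : (∫ t in (0:ℝ)..1, g (f t) * f' t) = 0 := by
    set G : ℝ → ℝ := fun y => ∫ s in (0:ℝ)..y, g s with hG
    have hGderiv : ∀ y, HasDerivAt G (g y) y := fun y =>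
      intervalIntegral.integral_hasDerivAt_right (hKg.continuous.intervalIntegrable 0 y)
        (hKg.continuous.stronglyMeasurableAtFilter _ _) hKg.continuous.continuousAt
    have hGcont : Continuous G := by
      rw [continuous_iff_continuousAt]; exact fun y => (hGderiv y).continuousAt
    have hScomp : IsCompact (f '' Icc 0 1) := isCompact_Icc.image hcontf
    have hSconn : (f '' Icc 0 1).OrdConnected :=
      ((isPreconnected_Icc).image f hcontf.continuousOn).ordConnected
    have hmem : ∀ t : ℝ, f t ∈ f '' Icc 0 1 := by
      intro t
      refine ⟨Int.fract t, ⟨Int.fract_nonneg t, (Int.fract_lt_one t).le⟩, ?_⟩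
      conv_rhs => rw [show t = Int.fract t + (⌊t⌋ : ℝ) by rw [Int.fract]; ring]
      exact (hperZ ⌊t⌋ (Int.fract t)).symm
    obtain ⟨C, hC⟩ := hScomp.exists_bound_of_continuousOn hKg.continuous.continuousOn
    have hC0 : 0 ≤ C := (norm_nonneg _).trans (hC (f 0) (hmem 0))
    have hGlip : ∀ a b : ℝ, |G (f a) - G (f b)| ≤ C * |f a - f b| := by
      intro a b
      have h1 : G (f a) - G (f b) = ∫ s in (f b)..(f a), g s := by
        rw [hG]
        have := intervalIntegral.integral_add_adjacent_intervals (μ := volume)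
          (hKg.continuous.intervalIntegrable 0 (f b)) (hKg.continuous.intervalIntegrable (f b) (f a))
        simp only []
        linarith [this]
      rw [h1]
      have := intervalIntegral.norm_integral_le_of_norm_le_const (a := f b) (b := f a)
        (C := C) (f := g) (fun x hx => hC x (hSconn.uIcc_subset (hmem b) (hmem a)
          (Ioc_subset_Icc_self hx)))
      simpa [Real.norm_eq_abs] using this
    have key2 := hasDerivAt_integral_of_dominated_loc_of_lip
      (μ := volume.restrict (Ioc (0:ℝ) 1))
      (F := fun h t => G (f (t + h)))
      (F' := fun t => g (f t) * f' t)
      (x₀ := 0) (bound := fun _ => C * L)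
      (Filter.univ_mem (f := nhds 0))
      (Filter.Eventually.of_forall fun h =>
        (hGcont.comp (hcontf.comp (continuous_id.add continuous_const))).aestronglyMeasurable)
      ((hGcont.comp (hcontf.comp (continuous_id.add continuous_const))).integrableOn_Ioc)
      ?_ ?_
      ((continuous_const : Continuous fun _ : ℝ => C * (L:ℝ)).integrableOn_Ioc)
      ?_
    · have hconst : (fun h : ℝ => ∫ t, G (f (t + h)) ∂(volume.restrict (Ioc (0:ℝ) 1)))
          = fun _ : ℝ => ∫ t, G (f t) ∂(volume.restrict (Ioc (0:ℝ) 1)) := by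
        funext h
        rw [← intervalIntegral.integral_of_le zero_le_one,
          ← intervalIntegral.integral_of_le zero_le_one]
        rw [intervalIntegral.integral_comp_add_right (fun t => G (f t)) h]
        have hGfper : Function.Periodic (fun t => G (f t)) 1 := fun t => by
          simp only []; rw [hper t]
        have := hGfper.intervalIntegral_add_eq h 0
        simpa [add_comm, zero_add] using this
      have hd := key2.2
      rw [hconst] at hd
      have h0 : HasDerivAt (fun _ : ℝ => ∫ t, G (f t) ∂(volume.restrict (Ioc (0:ℝ) 1)))
          0 0 := hasDerivAt_const 0 _
      have := h0.unique hd
      rw [← intervalIntegral.integral_of_le zero_le_one] at this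
      exact this.symm
    · -- F' measurable
      have h2 : AEStronglyMeasurable (fun t : ℝ => g (f t) * deriv f t) volume :=
        (hcont_h.measurable.mul (measurable_deriv f)).aestronglyMeasurable
      exact (h2.congr (hf'ae.mono fun t ht => by rw [ht])).restrict
    · -- Lipschitz
      refine Filter.Eventually.of_forall fun t => ?_
      have hl : LipschitzWith (Real.nnabs (C * L)) (fun h : ℝ => G (f (t + h))) := by
        apply LipschitzWith.of_dist_le_mul
        intro a b
        rw [Real.dist_eq, Real.dist_eq]
        have hd : |f (t + a) - f (t + b)| ≤ L * |a - b| := by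
          have := hf.dist_le_mul (t + a) (t + b)
          rw [Real.dist_eq, Real.dist_eq] at this
          simpa [add_sub_add_left_eq_sub] using this
        calc |G (f (t + a)) - G (f (t + b))| ≤ C * |f (t + a) - f (t + b)| := hGlip _ _
          _ ≤ C * (L * |a - b|) := mul_le_mul_of_nonneg_left hd hC0
          _ = (Real.nnabs (C * L) : ℝ) * |a - b| := by
              have he : (Real.nnabs (C * L) : ℝ) = C * L := by
                rw [Real.coe_nnabs]; exact abs_of_nonneg (by positivity)
              rw [he]; ring
      exact hl.lipschitzOnWith
    · -- a.e. differentiability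
      refine ae_restrict_of_ae ?_
      filter_upwards [hf'] with t ht
      have h1 : HasDerivAt (fun h : ℝ => t + h) 1 0 := by
        simpa using (hasDerivAt_id (0:ℝ)).const_add t
      have ht' : HasDerivAt f (f' t) (t + 0) := by simpa using ht
      have h2 : HasDerivAt (fun h : ℝ => f (t + h)) (f' t * 1) 0 :=
        HasDerivAt.comp 0 ht' h1
      have h3 : HasDerivAt (fun h : ℝ => G (f (t + h))) (g (f (t + 0)) * (f' t * 1)) 0 :=
        by have := HasDerivAt.comp 0 (hGderiv (f (t + 0))) h2; exact this
      simpa using h3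
  rw [part2]
  simp
end

section
/- With notation as above, g is differentiable with g'(y) = ∫_0^1 ∫_{-∞}^{∞} φ(z + y − f(x)) φ(z) dz dx, and g'(y) ≥ 0 for all y. If moreover φ(z) > 0 for all z, then g'(y) > 0 for all y. -/
open MeasureTheory Set

theorem g_differentiable_nonneg_deriv
    (f φ Φ Φ₂ g : ℝ → ℝ) (L : NNReal)
    (hf : LipschitzWith L f)
    (hper : ∀ x, f (x + 1) = f x)
    (hφcont : Continuous φ)
    (hφnonneg : ∀ z, 0 ≤ φ z)
    (hφint : Integrable φ)
    (hφone : ∫ z, φ z = 1)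
    (hφbdd : BddAbove (Set.range φ))
    (hΦ : ∀ t, Φ t = ∫ z in Set.Iic t, φ z)
    (hΦ₂ : ∀ t, Φ₂ t = ∫ z, Φ (t + z) * φ z)
    (hg : ∀ y, g y = ∫ x in (0:ℝ)..1, Φ₂ (y - f x)) :
    (∀ y, HasDerivAt g (∫ x in (0:ℝ)..1, ∫ z, φ (z + y - f x) * φ z) y) ∧
    (∀ y, 0 ≤ ∫ x in (0:ℝ)..1, ∫ z, φ (z + y - f x) * φ z) ∧
    ((∀ z, 0 < φ z) → ∀ y, 0 < ∫ x in (0:ℝ)..1, ∫ z, φ (z + y - f x) * φ z) := by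
  classical
  set C : ℝ := sSup (Set.range φ) with hCdef
  have hφleC : ∀ z, φ z ≤ C := fun z => le_csSup hφbdd ⟨z, rfl⟩
  have hC0 : 0 ≤ C := le_trans (hφnonneg 0) (hφleC 0)
  -- Φ basic facts
  have hΦeq : ∀ t, Φ t = (∫ z in Iic (0:ℝ), φ z) + ∫ z in (0:ℝ)..t, φ z := by
    intro t
    rw [hΦ t, ← intervalIntegral.integral_Iic_sub_Iic hφint.integrableOn hφint.integrableOn]
    ring
  have hΦderiv : ∀ t, HasDerivAt Φ (φ t) t := by
    intro t
    have h1 : HasDerivAt (fun u => ∫ z in (0:ℝ)..u, φ z) (φ t) t :=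
      intervalIntegral.integral_hasDerivAt_right hφint.intervalIntegrable
        hφcont.stronglyMeasurable.stronglyMeasurableAtFilter hφcont.continuousAt
    have h2 : HasDerivAt (fun u => (∫ z in Iic (0:ℝ), φ z) + ∫ z in (0:ℝ)..u, φ z) (φ t) t := by
      have := (hasDerivAt_const t (∫ z in Iic (0:ℝ), φ z)).add h1
      rw [zero_add] at this; exact this
    rw [show Φ = fun u => (∫ z in Iic (0:ℝ), φ z) + ∫ z in (0:ℝ)..u, φ z from funext hΦeq]
    exact h2
  have hΦnonneg : ∀ t, 0 ≤ Φ t := fun t => by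
    rw [hΦ]; exact setIntegral_nonneg measurableSet_Iic fun z _ => hφnonneg z
  have hΦle1 : ∀ t, Φ t ≤ 1 := fun t => by
    rw [hΦ, ← hφone]
    exact setIntegral_le_integral hφint (Filter.Eventually.of_forall hφnonneg)
  have hΦcont : Continuous Φ :=
    continuous_iff_continuousAt.2 fun t => (hΦderiv t).continuousAt
  -- Lipschitz bound for Φ
  have hΦlip : ∀ a b, |Φ a - Φ b| ≤ C * |a - b| := by
    intro a b
    have hsub : Φ a - Φ b = ∫ z in b..a, φ z := by
      rw [hΦeq a, hΦeq b]
      have := intervalIntegral.integral_interval_sub_left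
        (hφint.intervalIntegrable (a := (0:ℝ)) (b := a)) (hφint.intervalIntegrable (a := (0:ℝ)) (b := b))
      linarith [this]
    rw [hsub, ← Real.norm_eq_abs]
    exact intervalIntegral.norm_integral_le_of_norm_le_const fun x _ => by
      rw [Real.norm_eq_abs, abs_of_nonneg (hφnonneg x)]; exact hφleC x
  -- integrability of products
  have hprod_int : ∀ c : ℝ, Integrable (fun z => φ (c + z) * φ z) := by
    intro c
    exact hφint.bdd_mul (c := C) ((hφcont.comp (continuous_const.add continuous_id)).aestronglyMeasurable)
      (Filter.Eventually.of_forall fun z => by rw [Real.norm_eq_abs, abs_of_nonneg (hφnonneg _)]; exact hφleC _)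
  have hΦprod_int : ∀ c : ℝ, Integrable (fun z => Φ (c + z) * φ z) := by
    intro c
    exact hφint.bdd_mul (c := 1) ((hΦcont.comp (continuous_const.add continuous_id)).aestronglyMeasurable)
      (Filter.Eventually.of_forall fun z => by rw [Real.norm_eq_abs, abs_of_nonneg (hΦnonneg _)]; exact hΦle1 _)
  -- derivative of Φ₂
  have hΦ₂deriv : ∀ t₀ : ℝ, HasDerivAt Φ₂ (∫ z, φ (t₀ + z) * φ z) t₀ := by
    intro t₀
    have key := hasDerivAt_integral_of_dominated_loc_of_lip
      (F := fun t z => Φ (t + z) * φ z) (F' := fun z => φ (t₀ + z) * φ z)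
      (bound := fun z => C * φ z) (s := Metric.ball t₀ 1) (μ := volume) (x₀ := t₀) (Metric.ball_mem_nhds t₀ one_pos)
      (Filter.Eventually.of_forall fun t => by
        have hc : Continuous fun z => Φ (t + z) * φ z :=
          ((hΦcont.comp (continuous_const.add continuous_id)).mul hφcont)
        exact hc.aestronglyMeasurable)
      (hΦprod_int t₀)
      (((hφcont.comp (continuous_const.add continuous_id)).mul hφcont).aestronglyMeasurable)
      (Filter.Eventually.of_forall fun z => by
        have : LipschitzWith (Real.nnabs (C * φ z)) (fun t => Φ (t + z) * φ z) := by
          apply LipschitzWith.of_dist_le_mul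
          intro a b
          rw [Real.coe_nnabs, Real.dist_eq, Real.dist_eq]
          have : Φ (a + z) * φ z - Φ (b + z) * φ z = (Φ (a + z) - Φ (b + z)) * φ z := by ring
          rw [this, abs_mul, abs_of_nonneg (hφnonneg z),
            abs_of_nonneg (mul_nonneg hC0 (hφnonneg z))]
          calc |Φ (a + z) - Φ (b + z)| * φ z ≤ (C * |a + z - (b + z)|) * φ z :=
                mul_le_mul_of_nonneg_right (hΦlip _ _) (hφnonneg z)
            _ = C * φ z * |a - b| := by rw [add_sub_add_right_eq_sub]; ring
        exact this.lipschitzOnWith)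
      (hφint.const_mul C)
      (Filter.Eventually.of_forall fun z => by
        have h1 : HasDerivAt (fun t => Φ (t + z)) (φ (t₀ + z)) t₀ := by
          have := (hΦderiv (t₀ + z)).comp t₀ ((hasDerivAt_id t₀).add_const z)
          simp only [mul_one] at this; exact this
        exact h1.mul_const (φ z))
    rw [show Φ₂ = fun t => ∫ z, Φ (t + z) * φ z from funext hΦ₂]
    exact key.2
  -- define the convolution density and its properties
  set h : ℝ → ℝ := fun t => ∫ z, φ (t + z) * φ z with hhdef
  have hh_nonneg : ∀ t, 0 ≤ h t := fun t =>
    integral_nonneg fun z => mul_nonneg (hφnonneg _) (hφnonneg _)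
  have hh_leC : ∀ t, h t ≤ C := by
    intro t
    have : h t ≤ ∫ z, C * φ z :=
      integral_mono (hprod_int t) (hφint.const_mul C) fun z =>
        mul_le_mul_of_nonneg_right (hφleC _) (hφnonneg z)
    simpa [integral_const_mul, hφone] using this
  have hh_cont : Continuous h := by
    apply continuous_of_dominated (bound := fun z => C * φ z)
    · exact fun t =>
        ((hφcont.comp (continuous_const.add continuous_id)).mul hφcont).aestronglyMeasurable
    · exact fun t => Filter.Eventually.of_forall fun z => by
        rw [Real.norm_eq_abs, abs_of_nonneg (mul_nonneg (hφnonneg _) (hφnonneg _))]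
        exact mul_le_mul_of_nonneg_right (hφleC _) (hφnonneg z)
    · exact hφint.const_mul C
    · exact Filter.Eventually.of_forall fun z =>
        (hφcont.comp (continuous_id.add continuous_const)).mul continuous_const
  -- Φ₂ Lipschitz
  have hΦ₂lip : LipschitzWith (Real.nnabs C) Φ₂ := by
    apply lipschitzWith_of_nnnorm_deriv_le (fun t => (hΦ₂deriv t).differentiableAt)
    intro t
    rw [← NNReal.coe_le_coe, coe_nnnorm, Real.norm_eq_abs, Real.coe_nnabs,
      abs_of_nonneg hC0, (hΦ₂deriv t).deriv, abs_of_nonneg (hh_nonneg t)]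
    exact hh_leC t
  have hΦ₂cont : Continuous Φ₂ := hΦ₂lip.continuous
  have hfcont : Continuous f := hf.continuous
  -- rewrite of integrand argument
  have hswap : ∀ y c : ℝ, (∫ z, φ (z + y - c) * φ z) = h (y - c) := by
    intro y c
    simp only [hhdef]
    congr 1
    funext z
    rw [show z + y - c = y - c + z by ring]
  -- derivative of g
  have hgderiv : ∀ y₀ : ℝ, HasDerivAt g (∫ x in (0:ℝ)..1, ∫ z, φ (z + y₀ - f x) * φ z) y₀ := by
    intro y₀
    have key := hasDerivAt_integral_of_dominated_loc_of_lip
      (F := fun y x => Φ₂ (y - f x)) (F' := fun x => h (y₀ - f x))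
      (bound := fun _ => C) (s := Metric.ball y₀ 1) (μ := volume.restrict (Ioc (0:ℝ) 1)) (x₀ := y₀) (Metric.ball_mem_nhds y₀ one_pos)
      (Filter.Eventually.of_forall fun y =>
        (hΦ₂cont.comp (continuous_const.sub hfcont)).aestronglyMeasurable)
      ((hΦ₂cont.comp (continuous_const.sub hfcont)).integrableOn_Ioc)
      ((hh_cont.comp (continuous_const.sub hfcont)).aestronglyMeasurable)
      (Filter.Eventually.of_forall fun x => by
        have : LipschitzWith (Real.nnabs C) (fun y => Φ₂ (y - f x)) := by
          have h1 : LipschitzWith 1 (fun y : ℝ => y - f x) :=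
            LipschitzWith.of_dist_le_mul fun a b => by
              rw [dist_sub_right]; simp
          have := hΦ₂lip.comp h1
          rw [mul_one] at this; exact this
        exact this.lipschitzOnWith)
      (integrableOn_const (by simp [Real.volume_Ioc]))
      (Filter.Eventually.of_forall fun x => by
        have := (hΦ₂deriv (y₀ - f x)).comp y₀ ((hasDerivAt_id y₀).sub_const (f x))
        simp only [mul_one] at this; exact this)
    have hfun : g = fun y => ∫ x in Ioc (0:ℝ) 1, Φ₂ (y - f x) := by
      funext y
      rw [hg y, intervalIntegral.integral_of_le zero_le_one]
    have hval : (∫ x in (0:ℝ)..1, ∫ z, φ (z + y₀ - f x) * φ z)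
        = ∫ x in Ioc (0:ℝ) 1, h (y₀ - f x) := by
      rw [intervalIntegral.integral_of_le zero_le_one]
      exact integral_congr_ae (Filter.Eventually.of_forall fun x => hswap y₀ (f x))
    rw [hfun, hval]
    exact key.2
  refine ⟨hgderiv, ?_, ?_⟩
  · intro y
    apply intervalIntegral.integral_nonneg zero_le_one
    intro x _
    exact integral_nonneg fun z => mul_nonneg (hφnonneg _) (hφnonneg _)
  · intro hpos y
    have hinner : ∀ c : ℝ, 0 < h c := by
      intro c
      rw [hhdef]
      refine (integral_pos_iff_support_of_nonneg
        (fun z => mul_nonneg (hφnonneg _) (hφnonneg _)) (hprod_int c)).2 ?_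
      have : Function.support (fun z => φ (c + z) * φ z) = univ :=
        eq_univ_of_forall fun z => Function.mem_support.2 (ne_of_gt (mul_pos (hpos _) (hpos _)))
      rw [this]
      simp [Real.volume_univ]
    rw [intervalIntegral.integral_of_le zero_le_one]
    have heq : (∫ x in Ioc (0:ℝ) 1, ∫ z, φ (z + y - f x) * φ z)
        = ∫ x in Ioc (0:ℝ) 1, h (y - f x) :=
      integral_congr_ae (Filter.Eventually.of_forall fun x => hswap y (f x))
    rw [heq]
    refine (integral_pos_iff_support_of_nonneg
      (fun x => (hinner _).le)
      ((hh_cont.comp (continuous_const.sub hfcont)).integrableOn_Ioc)).2 ?_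
    have : Function.support (fun x => h (y - f x)) = univ :=
      eq_univ_of_forall fun x => Function.mem_support.2 (ne_of_gt (hinner _))
    rw [show (Function.support fun x => h (((fun _ => y : ℝ → ℝ) - f) x)) = univ from this]
    simp [Measure.restrict_apply_univ, Real.volume_Ioc]
end

section
/- With notation as above and assuming φ is everywhere positive, continuous and bounded, and f is Lipschitz, 1-periodic and nonconstant, the second derivative of M at 0 satisfies M''(0) = −∫_0^1 g'(f(t)) f'(t)² dt < 0; hence θ* = 0 is a strict local maximizer of M. -/
open MeasureTheory Set

private lemma lip_of_bound {u : ℝ → ℝ} (B : ℝ)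
    (h : ∀ x y : ℝ, |u x - u y| ≤ B * |x - y|) : LipschitzWith (Real.nnabs B) u := by
  apply LipschitzWith.of_dist_le_mul
  intro x y
  rw [Real.dist_eq, Real.dist_eq, Real.coe_nnabs]
  calc |u x - u y| ≤ B * |x - y| := h x y
    _ ≤ |B| * |x - y| := mul_le_mul_of_nonneg_right (le_abs_self B) (abs_nonneg _)

private lemma intervalIntegrable_of_bdd {u : ℝ → ℝ} {B a b : ℝ}
    (hm : Measurable u) (hb : ∀ x, |u x| ≤ B) :
    IntervalIntegrable u volume a b := by
  refine IntervalIntegrable.mono_fun' (g := fun _ => B) intervalIntegrable_const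
    hm.aestronglyMeasurable.restrict ?_
  exact Filter.Eventually.of_forall fun x => by simpa [Real.norm_eq_abs] using hb x

theorem M_second_deriv_neg_strict_local_max
    (f f' φ Φ Φ₂ g g' M : ℝ → ℝ) (L : NNReal)
    (hf : LipschitzWith L f)
    (hper : ∀ x, f (x + 1) = f x)
    (hf' : ∀ᵐ x, HasDerivAt f (f' x) x)
    (hnonconst : 0 < volume {t : ℝ | t ∈ Set.Icc (0:ℝ) 1 ∧ f' t ≠ 0})
    (hφcont : Continuous φ)
    (hφpos : ∀ z, 0 < φ z)
    (hφint : Integrable φ)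
    (hφone : ∫ z, φ z = 1)
    (hφbdd : BddAbove (Set.range φ))
    (hΦ : ∀ t, Φ t = ∫ z in Set.Iic t, φ z)
    (hΦ₂ : ∀ t, Φ₂ t = ∫ z, Φ (t + z) * φ z)
    (hg : ∀ y, g y = ∫ x in (0:ℝ)..1, Φ₂ (y - f x))
    (hg' : ∀ y, HasDerivAt g (g' y) y)
    (hM : ∀ θ, M θ = ∫ t in (0:ℝ)..1, g (f t) * f (t - θ)) :
    HasDerivAt (deriv M) (-(∫ t in (0:ℝ)..1, g' (f t) * (f' t) ^ 2)) 0 ∧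
    (-(∫ t in (0:ℝ)..1, g' (f t) * (f' t) ^ 2)) < 0 ∧
    ∃ ε > 0, ∀ θ ∈ Set.Ioo (-ε) ε, θ ≠ 0 → M θ < M 0 := by
  -- basic constants and facts
  obtain ⟨C, hC⟩ : ∃ C : ℝ, ∀ z, φ z ≤ C := ⟨sSup (range φ), fun z => le_csSup hφbdd ⟨z, rfl⟩⟩
  have hC0 : 0 < C := (hφpos 0).trans_le (hC 0)
  have hφnn : ∀ z, 0 ≤ φ z := fun z => (hφpos z).le
  have hfc : Continuous f := hf.continuous
  -- facts about Φ
  have hΦsub : ∀ a b : ℝ, Φ b - Φ a = ∫ x in a..b, φ x := by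
    intro a b
    rw [hΦ a, hΦ b]
    exact intervalIntegral.integral_Iic_sub_Iic hφint.integrableOn hφint.integrableOn
  have hΦlipb : ∀ a b : ℝ, |Φ b - Φ a| ≤ C * |b - a| := by
    intro a b
    rw [hΦsub a b]
    have := intervalIntegral.norm_integral_le_of_norm_le_const
      (C := C) (f := φ) (a := a) (b := b) (fun x _ => by
        rw [Real.norm_eq_abs, abs_of_nonneg (hφnn x)]; exact hC x)
    simpa [Real.norm_eq_abs, abs_sub_comm b a] using this
  have hΦeq : Φ = fun t => Φ 0 + ∫ x in (0:ℝ)..t, φ x := funext fun t => by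
    have := hΦsub 0 t; linarith
  have hΦd : ∀ t, HasDerivAt Φ (φ t) t := by
    intro t
    rw [hΦeq]
    exact (intervalIntegral.integral_hasDerivAt_right hφint.intervalIntegrable
      (hφcont.stronglyMeasurableAtFilter _ _) hφcont.continuousAt).const_add (Φ 0)
  have hΦcont : Continuous Φ := continuous_iff_continuousAt.2 fun t => (hΦd t).continuousAt
  have hΦ0 : ∀ t, 0 ≤ Φ t := fun t => by
    rw [hΦ]; exact setIntegral_nonneg measurableSet_Iic fun x _ => hφnn x
  have hΦ1 : ∀ t, Φ t ≤ 1 := fun t => by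
    rw [hΦ, ← hφone]
    exact setIntegral_le_integral hφint (Filter.Eventually.of_forall hφnn)
  -- the function φ₂, derivative of Φ₂
  set φ₂ : ℝ → ℝ := fun t => ∫ z, φ (t + z) * φ z with hφ₂def
  have hmeasz : ∀ t, AEStronglyMeasurable (fun z => Φ (t + z) * φ z) volume := fun t =>
    ((hΦcont.comp (continuous_const.add continuous_id)).mul hφcont).aestronglyMeasurable
  have hint1 : ∀ t, Integrable (fun z => Φ (t + z) * φ z) := by
    intro t
    refine hφint.mono (hmeasz t) (Filter.Eventually.of_forall fun z => ?_)
    rw [Real.norm_eq_abs, Real.norm_eq_abs, abs_mul, abs_of_nonneg (hΦ0 _),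
      abs_of_nonneg (hφnn z)]
    nlinarith [hΦ1 (t + z), hφnn z, hΦ0 (t + z)]
  have hint2 : ∀ t, Integrable (fun z => φ (t + z) * φ z) := by
    intro t
    refine (hφint.const_mul C).mono
      (((hφcont.comp (continuous_const.add continuous_id)).mul hφcont).aestronglyMeasurable)
      (Filter.Eventually.of_forall fun z => ?_)
    rw [Real.norm_eq_abs, Real.norm_eq_abs, abs_mul, abs_of_nonneg (hφnn z),
      abs_of_nonneg (hφnn (t + z)), abs_mul, abs_of_nonneg hC0.le, abs_of_nonneg (hφnn z)]
    nlinarith [hC (t + z), hφnn z, hφnn (t + z)]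
  have hφ₂pos : ∀ t, 0 < φ₂ t := by
    intro t
    rw [hφ₂def]
    rw [integral_pos_iff_support_of_nonneg_ae
      (Filter.Eventually.of_forall fun z => mul_nonneg (hφnn _) (hφnn _)) (hint2 t)]
    have hsupp : (Function.support fun z => φ (t + z) * φ z) = univ := by
      ext z
      simp [Function.mem_support, (hφpos (t + z)).ne', (hφpos z).ne']
    rw [hsupp]
    simp
  have hφ₂leC : ∀ t, φ₂ t ≤ C := by
    intro t
    have h1 : φ₂ t ≤ ∫ z, C * φ z :=
      integral_mono (hint2 t) (hφint.const_mul C)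
        (fun z => mul_le_mul_of_nonneg_right (hC _) (hφnn z))
    rwa [integral_const_mul, hφone, mul_one] at h1
  have hφ₂nn : ∀ t, 0 ≤ φ₂ t := fun t => (hφ₂pos t).le
  -- Φ₂ has derivative φ₂
  have hΦ₂eq : Φ₂ = fun t => ∫ z, Φ (t + z) * φ z := funext hΦ₂
  have hΦ₂d : ∀ t, HasDerivAt Φ₂ (φ₂ t) t := by
    intro t₀
    rw [hΦ₂eq]
    have key := hasDerivAt_integral_of_dominated_loc_of_lip (μ := volume)
      (F := fun t z => Φ (t + z) * φ z) (F' := fun z => φ (t₀ + z) * φ z)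
      (bound := fun z => C * φ z) (x₀ := t₀)
      (Metric.ball_mem_nhds _ zero_lt_one) (Filter.Eventually.of_forall fun t => hmeasz t) (hint1 t₀)
      (((hφcont.comp (continuous_const.add continuous_id)).mul hφcont).aestronglyMeasurable)
      (Filter.Eventually.of_forall fun z => ?_)
      (hφint.const_mul C)
      (Filter.Eventually.of_forall fun z => ?_)
    · exact key.2
    · -- Lipschitz bound
      refine (lip_of_bound (C * φ z) fun x y => ?_).lipschitzOnWith
      have h1 : |Φ (x + z) * φ z - Φ (y + z) * φ z| = |Φ (x + z) - Φ (y + z)| * φ z := by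
        rw [← sub_mul, abs_mul, abs_of_nonneg (hφnn z)]
      rw [h1]
      have h2 := hΦlipb (y + z) (x + z)
      have h3 : x + z - (y + z) = x - y := by ring
      rw [h3] at h2
      nlinarith [hφnn z, abs_nonneg (x - y)]
    · -- differentiability
      have h1 : HasDerivAt (fun t : ℝ => t + z) 1 t₀ := (hasDerivAt_id t₀).add_const z
      have h2 := ((hΦd (t₀ + z)).comp t₀ h1).mul_const (φ z)
      simpa using h2
  have hΦ₂cont : Continuous Φ₂ := continuous_iff_continuousAt.2 fun t => (hΦ₂d t).continuousAt
  have hφ₂meas : Measurable φ₂ := by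
    have : φ₂ = deriv Φ₂ := funext fun t => ((hΦ₂d t).deriv).symm
    rw [this]; exact measurable_deriv Φ₂
  have hΦ₂nn : ∀ t, 0 ≤ Φ₂ t := fun t => by
    rw [hΦ₂]; exact integral_nonneg fun z => mul_nonneg (hΦ0 _) (hφnn z)
  have hΦ₂le1 : ∀ t, Φ₂ t ≤ 1 := by
    intro t
    rw [hΦ₂, ← hφone]
    exact integral_mono (hint1 t) hφint fun z => by
      nlinarith [hΦ1 (t + z), hφnn z, hΦ0 (t + z)]
  -- derivative of g
  have hgeq : g = fun y => ∫ x in (0:ℝ)..1, Φ₂ (y - f x) := funext hg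
  have hgd : ∀ y₀ : ℝ, IntervalIntegrable (fun x => φ₂ (y₀ - f x)) volume 0 1 ∧
      HasDerivAt g (∫ x in (0:ℝ)..1, φ₂ (y₀ - f x)) y₀ := by
    intro y₀
    have key := intervalIntegral.hasDerivAt_integral_of_dominated_loc_of_deriv_le (μ := volume)
      (F := fun y t => Φ₂ (y - f t)) (F' := fun y t => φ₂ (y - f t)) (x₀ := y₀)
      (a := 0) (b := 1) (bound := fun _ => C)
      (Metric.ball_mem_nhds _ zero_lt_one)
      (Filter.Eventually.of_forall fun y =>
        (hΦ₂cont.comp (continuous_const.sub hfc)).aestronglyMeasurable.restrict)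
      ((hΦ₂cont.comp (continuous_const.sub hfc)).intervalIntegrable 0 1)
      ((hφ₂meas.comp (measurable_const.sub hfc.measurable)).aestronglyMeasurable.restrict)
      (Filter.Eventually.of_forall fun t _ x _ => by
        rw [Real.norm_eq_abs, abs_of_nonneg (hφ₂nn _)]; exact hφ₂leC _)
      intervalIntegrable_const
      (Filter.Eventually.of_forall fun t _ x _ => by
        have h1 : HasDerivAt (fun y : ℝ => y - f t) 1 x := (hasDerivAt_id x).sub_const (f t)
        have h2 := (hΦ₂d (x - f t)).comp x h1; rw [mul_one] at h2; exact h2)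
    exact ⟨key.1, hgeq ▸ key.2⟩
  have hg'eq : ∀ y, g' y = ∫ x in (0:ℝ)..1, φ₂ (y - f x) := fun y => (hg' y).unique (hgd y).2
  have hg'pos : ∀ y, 0 < g' y := fun y => by
    rw [hg'eq]
    exact intervalIntegral.intervalIntegral_pos_of_pos (hgd y).1 (fun x => hφ₂pos _) zero_lt_one
  have hg'leC : ∀ y, g' y ≤ C := by
    intro y
    rw [hg'eq]
    have h1 : ∫ x in (0:ℝ)..1, φ₂ (y - f x) ≤ ∫ _x in (0:ℝ)..1, C :=
      intervalIntegral.integral_mono_on zero_le_one (hgd y).1 intervalIntegrable_const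
        (fun x _ => hφ₂leC _)
    simpa using h1
  have hgc : Continuous g := continuous_iff_continuousAt.2 fun y => (hg' y).continuousAt
  have hg0 : ∀ y, 0 ≤ g y := fun y => by
    rw [hg]; exact intervalIntegral.integral_nonneg zero_le_one fun x _ => hΦ₂nn _
  have hg1 : ∀ y, g y ≤ 1 := by
    intro y
    rw [hg]
    have h1 : ∫ x in (0:ℝ)..1, Φ₂ (y - f x) ≤ ∫ _x in (0:ℝ)..1, (1:ℝ) :=
      intervalIntegral.integral_mono_on zero_le_one
        ((hΦ₂cont.comp (continuous_const.sub hfc)).intervalIntegrable 0 1)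
        intervalIntegrable_const (fun x _ => hΦ₂le1 _)
    simpa using h1
  -- the a.e. derivative D of f
  set D : ℝ → ℝ := deriv f with hDdef
  have hDper : ∀ t, D (t + 1) = D t := by
    intro t
    have h1 : (fun y => f (y + 1)) = f := funext hper
    calc D (t + 1) = deriv (fun y => f (y + 1)) t := (deriv_comp_add_const f 1 t).symm
      _ = deriv f t := by rw [h1]
  have hDmeas : Measurable D := measurable_deriv f
  have hDle : ∀ t, |D t| ≤ (L : ℝ) := by
    intro t
    by_cases hdiff : DifferentiableAt ℝ f t
    · have h1 := hdiff.hasDerivAt.le_of_lipschitz hf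
      rw [← Real.norm_eq_abs]
      exact h1
    · simp [hDdef, deriv_zero_of_not_differentiableAt hdiff, NNReal.coe_nonneg]
  have hfD : ∀ᵐ t, HasDerivAt f (D t) t := by
    filter_upwards [hf'] with t ht
    show HasDerivAt f (deriv f t) t
    rw [ht.deriv]; exact ht
  have hDae : ∀ᵐ t, f' t = D t := hf'.mono fun t ht => ht.deriv.symm
  -- h = g ∘ f and its properties
  have hhc : Continuous fun t => g (f t) := hgc.comp hfc
  have hh1 : ∀ t, |g (f t)| ≤ 1 := fun t => abs_le.2 ⟨by linarith [hg0 (f t)], hg1 (f t)⟩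
  have hglip : ∀ y₁ y₂, |g y₁ - g y₂| ≤ C * |y₁ - y₂| := by
    have hgL : LipschitzWith (Real.toNNReal C) g := by
      refine lipschitzWith_of_nnnorm_deriv_le (fun y => (hg' y).differentiableAt) fun y => ?_
      have h1 : deriv g y = g' y := (hg' y).deriv
      rw [← NNReal.coe_le_coe, coe_nnnorm, Real.norm_eq_abs, h1,
        Real.coe_toNNReal C hC0.le, abs_of_pos (hg'pos y)]
      exact hg'leC y
    intro y₁ y₂
    have := hgL.dist_le_mul y₁ y₂
    rwa [Real.dist_eq, Real.dist_eq, Real.coe_toNNReal C hC0.le] at this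
  have hflip : ∀ x y : ℝ, |f x - f y| ≤ (L : ℝ) * |x - y| := by
    intro x y
    have := hf.dist_le_mul x y
    rwa [Real.dist_eq, Real.dist_eq] at this
  -- first derivative of M
  have hMeq : M = fun θ => ∫ t in (0:ℝ)..1, g (f t) * f (t - θ) := funext hM
  have hMd : ∀ θ₀ : ℝ, HasDerivAt M (-(∫ t in (0:ℝ)..1, g (f t) * D (t - θ₀))) θ₀ := by
    intro θ₀
    have hshift : ∀ᵐ t : ℝ, HasDerivAt f (D (t - θ₀)) (t - θ₀) :=
      (measurePreserving_sub_right volume θ₀).quasiMeasurePreserving.ae hfD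
    have key := intervalIntegral.hasDerivAt_integral_of_dominated_loc_of_lip (μ := volume)
      (F := fun θ t => g (f t) * f (t - θ)) (F' := fun t => g (f t) * (D (t - θ₀) * (-1)))
      (x₀ := θ₀) (a := 0) (b := 1) (bound := fun t => |g (f t)| * (L : ℝ))
      (Metric.ball_mem_nhds _ zero_lt_one)
      (Filter.Eventually.of_forall fun θ =>
        ((hhc.mul (hfc.comp (continuous_id.sub continuous_const))).aestronglyMeasurable.restrict))
      ((hhc.mul (hfc.comp (continuous_id.sub continuous_const))).intervalIntegrable 0 1)
      ((hhc.measurable.mul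
        ((hDmeas.comp (measurable_id.sub measurable_const)).mul measurable_const)
        ).aestronglyMeasurable.restrict)
      (Filter.Eventually.of_forall fun t _ => ?_)
      ((hhc.abs.mul continuous_const).intervalIntegrable 0 1)
      ?_
    · have h2 : HasDerivAt M (∫ t in (0:ℝ)..1, g (f t) * (D (t - θ₀) * (-1))) θ₀ :=
        hMeq ▸ key.2
      have h3 : (fun t => g (f t) * (D (t - θ₀) * (-1))) = fun t => -(g (f t) * D (t - θ₀)) := by
        funext t; ring
      rwa [h3, intervalIntegral.integral_neg] at h2
    · -- Lipschitz in θ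
      refine (lip_of_bound (|g (f t)| * (L : ℝ)) fun x y => ?_).lipschitzOnWith
      have h1 : g (f t) * f (t - x) - g (f t) * f (t - y) = g (f t) * (f (t - x) - f (t - y)) := by
        ring
      rw [h1, abs_mul]
      have h2 := hflip (t - x) (t - y)
      have h3 : t - x - (t - y) = y - x := by ring
      rw [h3, abs_sub_comm y x] at h2
      nlinarith [abs_nonneg (g (f t)), abs_nonneg (x - y), NNReal.coe_nonneg L]
    · -- differentiability in θ
      filter_upwards [hshift] with t ht _
      have h1 : HasDerivAt (fun θ : ℝ => t - θ) (-1) θ₀ := (hasDerivAt_id θ₀).const_sub t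
      exact (ht.comp θ₀ h1).const_mul (g (f t))
  have hMc : Continuous M := continuous_iff_continuousAt.2 fun θ => (hMd θ).continuousAt
  -- shifting the first derivative using periodicity
  have hmshift : ∀ θ : ℝ, (∫ t in (0:ℝ)..1, g (f t) * D (t - θ))
      = ∫ s in (0:ℝ)..1, g (f (s + θ)) * D s := by
    intro θ
    have h1 : (∫ t in (0:ℝ)..1, g (f t) * D (t - θ))
        = ∫ t in (0:ℝ)..1, (fun s => g (f (s + θ)) * D s) (t - θ) := by
      apply intervalIntegral.integral_congr
      intro t _
      simp [sub_add_cancel]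
    have h2 := intervalIntegral.integral_comp_sub_right (a := 0) (b := 1) (fun s => g (f (s + θ)) * D s) θ
    have hp : Function.Periodic (fun s => g (f (s + θ)) * D s) 1 := by
      intro s
      simp only
      have e1 : s + 1 + θ = s + θ + 1 := by ring
      rw [hDper s, e1, hper (s + θ)]
    have h3 := hp.intervalIntegral_add_eq (0 - θ) 0
    have e1 : (0:ℝ) - θ + 1 = 1 - θ := by ring
    have e2 : (0:ℝ) + 1 = 1 := by norm_num
    rw [e1, e2] at h3
    rw [h1, h2, h3]
  have hderivM : deriv M = fun θ => -(∫ s in (0:ℝ)..1, g (f (s + θ)) * D s) := by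
    funext θ
    rw [(hMd θ).deriv, hmshift θ]
  -- measurability of g' ∘ f
  have hg'f_meas : Measurable fun s => g' (f s) := by
    have h1 : (fun s => g' (f s)) = fun s => deriv g (f s) :=
      funext fun s => ((hg' (f s)).deriv).symm
    rw [h1]
    exact (measurable_deriv g).comp hfc.measurable
  -- second derivative at 0
  have hm₀d : HasDerivAt (fun θ => ∫ s in (0:ℝ)..1, g (f (s + θ)) * D s)
      (∫ s in (0:ℝ)..1, g' (f s) * D s * D s) 0 := by
    have key := intervalIntegral.hasDerivAt_integral_of_dominated_loc_of_lip (μ := volume)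
      (F := fun θ s => g (f (s + θ)) * D s) (F' := fun s => g' (f s) * D s * D s)
      (x₀ := 0) (a := 0) (b := 1) (bound := fun s => C * (L : ℝ) * |D s|)
      (Metric.ball_mem_nhds _ zero_lt_one)
      (Filter.Eventually.of_forall fun θ =>
        (((hgc.comp (hfc.comp (continuous_id.add continuous_const))).measurable.mul hDmeas)
          ).aestronglyMeasurable.restrict)
      (intervalIntegrable_of_bdd (B := 1 * (L : ℝ))
        ((hgc.comp (hfc.comp (continuous_id.add continuous_const))).measurable.mul hDmeas)
        (fun s => by
          rw [abs_mul]
          exact mul_le_mul (hh1 _) (hDle s) (abs_nonneg _) zero_le_one))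
      (((hg'f_meas.mul hDmeas).mul hDmeas).aestronglyMeasurable.restrict)
      (Filter.Eventually.of_forall fun s _ => ?_)
      (intervalIntegrable_of_bdd (B := C * (L : ℝ) * (L : ℝ))
        ((measurable_const.mul hDmeas.abs))
        (fun s => by
          rw [abs_mul, abs_mul, abs_abs, abs_of_nonneg hC0.le,
            abs_of_nonneg (NNReal.coe_nonneg L)]
          exact mul_le_mul_of_nonneg_left (hDle s) (by positivity)))
      ?_
    · exact key.2
    · -- Lipschitz in θ
      refine (lip_of_bound (C * (L : ℝ) * |D s|) fun x y => ?_).lipschitzOnWith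
      have h1 : g (f (s + x)) * D s - g (f (s + y)) * D s
          = (g (f (s + x)) - g (f (s + y))) * D s := by ring
      rw [h1, abs_mul]
      have h2 := hglip (f (s + x)) (f (s + y))
      have h3 := hflip (s + x) (s + y)
      have h4 : s + x - (s + y) = x - y := by ring
      rw [h4] at h3
      calc |g (f (s + x)) - g (f (s + y))| * |D s|
          ≤ C * ((L : ℝ) * |x - y|) * |D s| := by
            apply mul_le_mul_of_nonneg_right _ (abs_nonneg (D s))
            calc |g (f (s + x)) - g (f (s + y))| ≤ C * |f (s + x) - f (s + y)| := h2
              _ ≤ C * ((L : ℝ) * |x - y|) := mul_le_mul_of_nonneg_left h3 hC0.le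
        _ = C * (L : ℝ) * |D s| * |x - y| := by ring
    · -- differentiability in θ at 0
      filter_upwards [hfD] with s hs _
      have h1 : HasDerivAt (fun θ : ℝ => s + θ) 1 0 := (hasDerivAt_id 0).const_add s
      have h2 : HasDerivAt f (D s) ((fun θ : ℝ => s + θ) 0) := by simpa using hs
      have h3 : HasDerivAt (fun θ : ℝ => f (s + θ)) (D s * 1) 0 := h2.comp 0 h1
      have h4 : HasDerivAt g (g' (f s)) ((fun θ : ℝ => f (s + θ)) 0) := by
        simpa using hg' (f s)
      have h5 : HasDerivAt (fun θ : ℝ => g (f (s + θ))) (g' (f s) * (D s * 1)) 0 := h4.comp 0 h3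
      have h6 := h5.mul_const (D s)
      simpa [mul_one] using h6
  -- identification of the integrals
  have hI0eq : (∫ s in (0:ℝ)..1, g' (f s) * D s * D s)
      = ∫ t in (0:ℝ)..1, g' (f t) * (f' t) ^ 2 := by
    apply intervalIntegral.integral_congr_ae
    filter_upwards [hDae] with t ht _
    rw [← ht]; ring
  have hfirst : HasDerivAt (deriv M) (-(∫ t in (0:ℝ)..1, g' (f t) * (f' t) ^ 2)) 0 := by
    rw [hderivM, ← hI0eq]
    exact hm₀d.neg
  -- positivity of the second derivative integral
  have hI0pos : 0 < ∫ s in (0:ℝ)..1, g' (f s) * D s * D s := by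
    rw [intervalIntegral.integral_pos_iff_support_of_nonneg_ae (f := fun s => g' (f s) * D s * D s)
      (Filter.Eventually.of_forall fun s => by
        have : g' (f s) * D s * D s = g' (f s) * (D s * D s) := by ring
        show 0 ≤ g' (f s) * D s * D s
        rw [this]
        exact mul_nonneg (hg'pos (f s)).le (mul_self_nonneg (D s)))
      (intervalIntegrable_of_bdd (B := C * (L : ℝ) * (L : ℝ))
        ((hg'f_meas.mul hDmeas).mul hDmeas)
        (fun s => by
          rw [abs_mul, abs_mul, abs_of_pos (hg'pos (f s))]
          exact mul_le_mul (mul_le_mul (hg'leC _) (hDle s) (abs_nonneg _) hC0.le)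
            (hDle s) (abs_nonneg _) (by positivity)))]
    refine ⟨zero_lt_one, ?_⟩
    have hnull : volume ({(0:ℝ)} ∪ {t | ¬ f' t = D t}) = 0 :=
      measure_union_null (measure_singleton 0) (ae_iff.1 hDae)
    have hsub : {t : ℝ | t ∈ Set.Icc (0:ℝ) 1 ∧ f' t ≠ 0}
        ⊆ ((Function.support fun s => g' (f s) * D s * D s) ∩ Ioc 0 1)
          ∪ ({(0:ℝ)} ∪ {t | ¬ f' t = D t}) := by
      rintro t ⟨htmem, htne⟩
      by_cases hfd : f' t = D t
      · by_cases ht0 : t = 0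
        · exact Or.inr (Or.inl ht0)
        · refine Or.inl ⟨?_, ⟨lt_of_le_of_ne htmem.1 (Ne.symm ht0), htmem.2⟩⟩
          simp only [Function.mem_support]
          have hD0 : D t ≠ 0 := hfd ▸ htne
          exact mul_ne_zero (mul_ne_zero (hg'pos (f t)).ne' hD0) hD0
      · exact Or.inr (Or.inr hfd)
    calc (0 : ENNReal) < volume {t : ℝ | t ∈ Set.Icc (0:ℝ) 1 ∧ f' t ≠ 0} := hnonconst
      _ ≤ volume (((Function.support fun s => g' (f s) * D s * D s) ∩ Ioc 0 1)
          ∪ ({(0:ℝ)} ∪ {t | ¬ f' t = D t})) := measure_mono hsub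
      _ ≤ volume ((Function.support fun s => g' (f s) * D s * D s) ∩ Ioc 0 1)
          + volume ({(0:ℝ)} ∪ {t | ¬ f' t = D t}) := measure_union_le _ _
      _ = volume ((Function.support fun s => g' (f s) * D s * D s) ∩ Ioc 0 1) := by
          rw [hnull, add_zero]
  have hsecond : (-(∫ t in (0:ℝ)..1, g' (f t) * (f' t) ^ 2)) < 0 := by
    rw [← hI0eq]; linarith
  refine ⟨hfirst, hsecond, ?_⟩
  -- M'(0) = 0
  set A : ℝ → ℝ := fun y => ∫ x in (0:ℝ)..y, g x with hAdef
  have hAd : ∀ y, HasDerivAt A (g y) y := fun y =>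
    intervalIntegral.integral_hasDerivAt_right (hgc.intervalIntegrable _ _)
      (hgc.stronglyMeasurableAtFilter _ _) hgc.continuousAt
  have hAc : Continuous A := continuous_iff_continuousAt.2 fun y => (hAd y).continuousAt
  have huc : Continuous fun t => A (f t) := hAc.comp hfc
  have hAlip : ∀ x y : ℝ, |A x - A y| ≤ 1 * |x - y| := by
    intro x y
    have h1 : A x - A y = ∫ s in y..x, g s := by
      rw [hAdef]
      exact intervalIntegral.integral_interval_sub_left (hgc.intervalIntegrable _ _)
        (hgc.intervalIntegrable _ _)
    rw [h1]
    have := intervalIntegral.norm_integral_le_of_norm_le_const (C := 1) (f := g)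
      (a := y) (b := x) (fun s _ => by
        rw [Real.norm_eq_abs, abs_of_nonneg (hg0 s)]; exact hg1 s)
    simpa [Real.norm_eq_abs, abs_sub_comm x y] using this
  have hulip : ∀ x y : ℝ, |A (f x) - A (f y)| ≤ (L : ℝ) * |x - y| := by
    intro x y
    calc |A (f x) - A (f y)| ≤ 1 * |f x - f y| := hAlip _ _
      _ = |f x - f y| := one_mul _
      _ ≤ (L : ℝ) * |x - y| := hflip x y
  have hP1 : HasDerivAt (fun ε => ∫ s in (0:ℝ)..1, A (f (s + ε)))
      (∫ s in (0:ℝ)..1, g (f s) * D s) 0 := by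
    have key := intervalIntegral.hasDerivAt_integral_of_dominated_loc_of_lip (μ := volume)
      (F := fun ε s => A (f (s + ε))) (F' := fun s => g (f s) * D s)
      (x₀ := 0) (a := 0) (b := 1) (bound := fun _ => (L : ℝ))
      (Metric.ball_mem_nhds _ zero_lt_one)
      (Filter.Eventually.of_forall fun θ =>
        (huc.comp (continuous_id.add continuous_const)).aestronglyMeasurable.restrict)
      ((huc.comp (continuous_id.add continuous_const)).intervalIntegrable 0 1)
      ((hhc.measurable.mul hDmeas).aestronglyMeasurable.restrict)
      (Filter.Eventually.of_forall fun s _ => ?_)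
      intervalIntegrable_const
      ?_
    · exact key.2
    · refine (lip_of_bound ((L : ℝ)) fun x y => ?_).lipschitzOnWith
      have h1 := hulip (s + x) (s + y)
      have h2 : s + x - (s + y) = x - y := by ring
      rwa [h2] at h1
    · filter_upwards [hfD] with s hs _
      have h1 : HasDerivAt (fun θ : ℝ => s + θ) 1 0 := (hasDerivAt_id 0).const_add s
      have h2 : HasDerivAt f (D s) ((fun θ : ℝ => s + θ) 0) := by simpa using hs
      have h3 : HasDerivAt (fun θ : ℝ => f (s + θ)) (D s * 1) 0 := h2.comp 0 h1
      have h4 : HasDerivAt A (g (f s)) ((fun θ : ℝ => f (s + θ)) 0) := by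
        simpa using hAd (f s)
      have h5 : HasDerivAt (fun θ : ℝ => A (f (s + θ))) (g (f s) * (D s * 1)) 0 := by
        have := h4.comp 0 h3; exact this
      simpa [mul_one] using h5
  have hP2 : HasDerivAt (fun ε => ∫ s in (0:ℝ)..1, A (f (s + ε))) 0 0 := by
    have hi : ∀ a b : ℝ, IntervalIntegrable (fun t => A (f t)) volume a b := fun a b =>
      huc.intervalIntegrable a b
    have heq : (fun ε => ∫ s in (0:ℝ)..1, A (f (s + ε)))
        = fun ε => ((∫ s in (0:ℝ)..1, A (f s)) - ∫ s in (0:ℝ)..ε, A (f s))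
          + ∫ s in (0:ℝ)..ε, A (f (s + 1)) := by
      funext ε
      have h1 : ∫ s in (0:ℝ)..1, A (f (s + ε)) = ∫ x in ε..(1+ε), A (f x) := by
        have := intervalIntegral.integral_comp_add_right (a := (0:ℝ)) (b := 1)
          (fun x => A (f x)) ε
        simpa using this
      have h2 : ∫ s in (0:ℝ)..ε, A (f (s + 1)) = ∫ x in (1:ℝ)..(ε+1), A (f x) := by
        have := intervalIntegral.integral_comp_add_right (a := (0:ℝ)) (b := ε)
          (fun x => A (f x)) 1
        simpa using this
      have c1 : (∫ x in ε..(1:ℝ), A (f x)) + ∫ x in (1:ℝ)..(1+ε), A (f x)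
          = ∫ x in ε..(1+ε), A (f x) :=
        intervalIntegral.integral_add_adjacent_intervals (hi _ _) (hi _ _)
      have c2 : (∫ x in (0:ℝ)..ε, A (f x)) + ∫ x in ε..(1:ℝ), A (f x)
          = ∫ x in (0:ℝ)..1, A (f x) :=
        intervalIntegral.integral_add_adjacent_intervals (hi _ _) (hi _ _)
      have e1 : (1:ℝ) + ε = ε + 1 := by ring
      rw [h1, h2, e1]
      rw [e1] at c1
      linarith [c1, c2]
    rw [heq]
    have d1 : HasDerivAt (fun ε : ℝ => ∫ s in (0:ℝ)..ε, A (f s)) (A (f 0)) 0 :=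
      intervalIntegral.integral_hasDerivAt_right (hi _ _)
        (huc.stronglyMeasurableAtFilter _ _) huc.continuousAt
    have d2 : HasDerivAt (fun ε : ℝ => ∫ s in (0:ℝ)..ε, A (f (s + 1))) (A (f (0 + 1))) 0 :=
      intervalIntegral.integral_hasDerivAt_right
        ((huc.comp (continuous_id.add continuous_const)).intervalIntegrable _ _)
        ((huc.comp (continuous_id.add continuous_const)).stronglyMeasurableAtFilter _ _)
        (huc.comp (continuous_id.add continuous_const)).continuousAt
    have d3 := ((hasDerivAt_const (0:ℝ) (∫ s in (0:ℝ)..1, A (f s))).sub d1).add d2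
    have e2 : A (f (0 + 1)) = A (f 0) := by rw [hper 0]
    rw [e2] at d3
    have e3 : (0:ℝ) - A (f 0) + A (f 0) = 0 := by ring
    rw [e3] at d3; exact d3
  have hcrit : (∫ s in (0:ℝ)..1, g (f s) * D s) = 0 := hP1.unique hP2
  have hdM0 : deriv M 0 = 0 := by
    rw [hderivM]
    simp only [add_zero]
    rw [hcrit, neg_zero]
  -- conclude with the strict local maximum
  set K : ℝ := -(∫ t in (0:ℝ)..1, g' (f t) * (f' t) ^ 2) with hKdef
  have hKneg : K < 0 := hsecond
  have hslope : Filter.Tendsto (fun θ => deriv M θ / θ) (nhdsWithin 0 {(0:ℝ)}ᶜ) (nhds K) := by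
    have h1 := hasDerivAt_iff_tendsto_slope.1 hfirst
    refine h1.congr' ?_
    filter_upwards [self_mem_nhdsWithin] with θ hθ
    rw [slope_def_field, hdM0, sub_zero, sub_zero, div_eq_inv_mul]
  have hev : ∀ᶠ θ in nhdsWithin 0 {(0:ℝ)}ᶜ, deriv M θ / θ < K / 2 :=
    hslope.eventually (Filter.Tendsto.eventually_lt_const (by linarith) Filter.tendsto_id)
  rw [eventually_nhdsWithin_iff] at hev
  rw [Metric.eventually_nhds_iff] at hev
  obtain ⟨ε, hε, hball⟩ := hev
  refine ⟨ε, hε, ?_⟩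
  intro θ hθ hθ0
  have hsign : ∀ x : ℝ, x ≠ 0 → |x| < ε → (x > 0 → deriv M x < 0) ∧ (x < 0 → 0 < deriv M x) := by
    intro x hx hxε
    have h1 : deriv M x / x < K / 2 := hball (by rwa [Real.dist_eq, sub_zero]) hx
    constructor
    · intro hxpos
      have := (div_lt_iff₀ hxpos).1 h1
      nlinarith
    · intro hxneg
      have := (div_lt_iff_of_neg hxneg).1 h1
      nlinarith
  rcases lt_or_gt_of_ne hθ0 with hneg | hpos
  · -- θ < 0 : M is strictly monotone on [θ, 0]
    have mono : StrictMonoOn M (Icc θ 0) := by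
      apply strictMonoOn_of_deriv_pos (convex_Icc θ 0) hMc.continuousOn
      intro x hx
      rw [interior_Icc] at hx
      have hxne : x ≠ 0 := ne_of_lt hx.2
      have hxε : |x| < ε := by
        rw [abs_lt]
        exact ⟨lt_trans hθ.1 hx.1, lt_trans hx.2 hε⟩
      exact (hsign x hxne hxε).2 hx.2
    exact mono ⟨le_rfl, hneg.le⟩ ⟨hneg.le, le_rfl⟩ hneg
  · -- θ > 0 : M is strictly antitone on [0, θ]
    have anti : StrictAntiOn M (Icc 0 θ) := by
      apply strictAntiOn_of_deriv_neg (convex_Icc 0 θ) hMc.continuousOn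
      intro x hx
      rw [interior_Icc] at hx
      have hxne : x ≠ 0 := ne_of_gt hx.1
      have hxε : |x| < ε := by
        rw [abs_lt]
        exact ⟨lt_trans (neg_lt_zero.2 hε) hx.1, lt_trans hx.2 hθ.2⟩
      exact (hsign x hxne hxε).1 hx.1
    exact anti ⟨le_rfl, hpos.le⟩ ⟨hpos.le, le_rfl⟩ hpos
end

section
/- (Uniform Glivenko–Cantelli for independent non-identical arrays) Let {Y_{i,n} : 1 ≤ i ≤ n, n ≥ 1} be a triangular array of row-wise independent real random variables with CDFs F_{i,n}, such that the family {F_{i,n}} is uniformly tight (for every ε>0 there is K with F_{i,n}(K) ≥ 1−ε and F_{i,n}(−K) ≤ ε for all i,n) and uniformly equicontinuous (sup_{i,n} sup_t (F_{i,n}(t+δ) − F_{i,n}(t)) → 0 as δ → 0). Let F̂_{[n]}(y) = (1/n)Σ_i 1{Y_{i,n} ≤ y} and F_{[n]} = (1/n)Σ_i F_{i,n}. Then sup_t |F̂_{[n]}(t) − F_{[n]}(t)| → 0 in probability as n → ∞. -/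
open MeasureTheory Set Filter

lemma empir_integral {Ω : Type*} [MeasurableSpace Ω] (μ : Measure Ω) [IsProbabilityMeasure μ]
    (Z : Ω → ℝ) (hm : Measurable Z) (t : ℝ) :
    ∫ ω, (if Z ω ≤ t then (1:ℝ) else 0) ∂μ = (μ {ω | Z ω ≤ t}).toReal := by
  have h : (fun ω => if Z ω ≤ t then (1:ℝ) else 0)
      = Set.indicator {ω | Z ω ≤ t} (fun _ => (1:ℝ)) := by
    ext ω; rw [Set.indicator_apply]; rfl
  have hs : MeasurableSet {ω | Z ω ≤ t} := hm measurableSet_Iic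
  rw [h, MeasureTheory.integral_indicator_const (1:ℝ) hs]
  simp
  rfl

lemma cheb_point {Ω : Type*} [MeasurableSpace Ω] (μ : Measure Ω) [IsProbabilityMeasure μ]
    {n : ℕ} (Yn : Fin n → Ω → ℝ) (hm : ∀ i, Measurable (Yn i))
    (hind : ProbabilityTheory.iIndepFun Yn μ)
    (t : ℝ) {c : ℝ} (hc : 0 < c) (hn : 0 < n) :
    μ {ω | c ≤ |(n : ℝ)⁻¹ * ∑ i : Fin n, (if Yn i ω ≤ t then (1:ℝ) else 0)
                - (n : ℝ)⁻¹ * ∑ i : Fin n, (μ {ω | Yn i ω ≤ t}).toReal|}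
      ≤ ENNReal.ofReal (1 / (n * c^2)) := by
  classical
  set g : ℝ → ℝ := fun x => if x ≤ t then 1 else 0 with hg
  have hgm : Measurable g := Measurable.ite measurableSet_Iic measurable_const measurable_const
  set X : Fin n → Ω → ℝ := fun i => g ∘ Yn i with hX
  have hXm : ∀ i, Measurable (X i) := fun i => hgm.comp (hm i)
  have hXb : ∀ i, ∀ ω, X i ω ∈ Set.Icc (0:ℝ) 1 := by
    intro i ω; simp only [hX, hg, Function.comp_apply]
    split <;> simp
  have hXL2 : ∀ i, MemLp (X i) 2 μ := fun i =>
    memLp_of_bounded (Filter.Eventually.of_forall (hXb i)) (hXm i).aestronglyMeasurable 2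
  set S : Ω → ℝ := ∑ i : Fin n, X i with hS
  have hSL2 : MemLp S 2 μ := memLp_finsetSum' _ (fun i _ => hXL2 i)
  have hint : ∀ i, ∫ ω, X i ω ∂μ = (μ {ω | Yn i ω ≤ t}).toReal := by
    intro i
    exact empir_integral μ (Yn i) (hm i) t
  have hES : ∫ ω, S ω ∂μ = ∑ i : Fin n, (μ {ω | Yn i ω ≤ t}).toReal := by
    rw [hS]
    simp only [Finset.sum_apply]
    rw [integral_finset_sum _ (fun i _ => (hXL2 i).integrable one_le_two)]
    exact Finset.sum_congr rfl fun i _ => hint i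
  have hvar : ProbabilityTheory.variance S μ ≤ n := by
    rw [hS, ProbabilityTheory.IndepFun.variance_sum (fun i _ => hXL2 i)
      (fun i _ j _ hij => ((hind.comp (fun _ => g) (fun _ => hgm)).indepFun hij))]
    calc ∑ i : Fin n, ProbabilityTheory.variance (X i) μ ≤ ∑ i : Fin n, 1 := by
          refine Finset.sum_le_sum fun i _ => ?_
          have h := ProbabilityTheory.variance_le_sub_mul_sub
            (μ := μ) (a := 0) (b := 1) (Filter.Eventually.of_forall (hXb i)) (hXm i).aemeasurable
          set m := ∫ x, X i x ∂μ with hmm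
          nlinarith [sq_nonneg (m - 1/2)]
      _ = n := by simp
  have hnc : (0:ℝ) < n * c := by positivity
  have cheb := ProbabilityTheory.meas_ge_le_variance_div_sq (μ := μ) hSL2 hnc
  have hsets : {ω | c ≤ |(n : ℝ)⁻¹ * ∑ i : Fin n, (if Yn i ω ≤ t then (1:ℝ) else 0)
                - (n : ℝ)⁻¹ * ∑ i : Fin n, (μ {ω | Yn i ω ≤ t}).toReal|}
      = {ω | (n:ℝ) * c ≤ |S ω - ∫ ω, S ω ∂μ|} := by
    ext ω
    have hSω : S ω = ∑ i : Fin n, (if Yn i ω ≤ t then (1:ℝ) else 0) := by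
      rw [hS, Finset.sum_apply]
      exact Finset.sum_congr rfl fun i _ => rfl
    simp only [Set.mem_setOf_eq, hSω, hES, ← mul_sub, abs_mul, abs_inv, Nat.abs_cast]
    rw [le_inv_mul_iff₀ (by exact_mod_cast hn)]
  rw [hsets]
  refine cheb.trans (ENNReal.ofReal_le_ofReal ?_)
  rw [div_le_div_iff₀ (by positivity) (by positivity)]
  calc ProbabilityTheory.variance S μ * (n * c^2) ≤ n * (n * c^2) := by
        have : (0:ℝ) < n * c^2 := by positivity
        nlinarith
    _ = 1 * ((n:ℝ) * c)^2 := by ring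

lemma grid_reduction (G H : ℝ → ℝ) (hG : Monotone G) (hH : Monotone H)
    (hG0 : ∀ t, 0 ≤ G t) (hG1 : ∀ t, G t ≤ 1) (hH0 : ∀ t, 0 ≤ H t) (hH1 : ∀ t, H t ≤ 1)
    {ε δ K : ℝ} (hε : 0 < ε) (hδ : 0 < δ)
    (hlow : H (-K) ≤ ε/4) (hhigh : 1 - ε/4 ≤ H K)
    (hosc : ∀ s, H (s + δ) - H s ≤ ε/4)
    (t : ℝ) (ht : ε ≤ |G t - H t|) :
    ∃ j ≤ ⌈2*K/δ⌉₊, ε/2 ≤ |G (-K + j*δ) - H (-K + j*δ)| := by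
  set m := ⌈2*K/δ⌉₊ with hm
  have hKm : K ≤ -K + m*δ := by
    have h1 : 2*K/δ ≤ (m:ℝ) := Nat.le_ceil _
    have h2 : 2*K ≤ (m:ℝ)*δ := by rw [div_le_iff₀ hδ] at h1; linarith
    linarith
  rcases le_or_gt t (-K) with hcase | hcase1
  · -- left tail, use j = 0
    refine ⟨0, Nat.zero_le _, ?_⟩
    have hHt : H t ≤ ε/4 := (hH hcase).trans hlow
    have h0 : (-K + (0:ℕ)*δ) = -K := by push_cast; ring
    rw [h0]
    rcases le_abs.mp ht with h | h
    · -- G t - H t ≥ ε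
      have hGK : ε + H t ≤ G (-K) := le_trans (by linarith) (hG hcase)
      have : ε/2 ≤ G (-K) - H (-K) := by
        have := hH0 t; linarith
      exact this.trans (le_abs_self _)
    · -- H t - G t ≥ ε : impossible
      have := hG0 t; linarith
  rcases le_or_gt (-K + m*δ) t with hcase2 | hcase2
  · -- right tail, use j = m
    refine ⟨m, le_rfl, ?_⟩
    have hHt : 1 - ε/4 ≤ H t := hhigh.trans (hH (hKm.trans hcase2))
    have hHm : 1 - ε/4 ≤ H (-K + m*δ) := hhigh.trans (hH hKm)
    rcases le_abs.mp ht with h | h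
    · -- G t - H t ≥ ε : impossible
      have := hG1 t; linarith
    · -- H t - G t ≥ ε
      have hGm : G (-K + m*δ) ≤ G t := hG hcase2
      have h1 : ε/2 ≤ H (-K + m*δ) - G (-K + m*δ) := by
        have := hH1 t; linarith
      calc ε/2 ≤ -(G (-K + m*δ) - H (-K + m*δ)) := by linarith
        _ ≤ |G (-K + m*δ) - H (-K + m*δ)| := neg_le_abs _
  · -- middle
    set j := ⌊(t+K)/δ⌋₊ with hj
    have htK : (0:ℝ) < t + K := by linarith
    have hj1 : -K + j*δ ≤ t := by
      have h1 : (j:ℝ) ≤ (t+K)/δ := Nat.floor_le (by positivity)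
      have : (j:ℝ)*δ ≤ t+K := by rw [← le_div_iff₀ hδ]; exact h1
      linarith
    have hj2 : t ≤ -K + (j+1:ℕ)*δ := by
      have h1 : (t+K)/δ < (j:ℝ)+1 := Nat.lt_floor_add_one _
      have : t+K < ((j:ℝ)+1)*δ := by rw [← div_lt_iff₀ hδ]; exact h1
      push_cast; linarith
    have hjm : j+1 ≤ m := by
      have : -K + (j:ℝ)*δ < -K + (m:ℝ)*δ := lt_of_le_of_lt hj1 hcase2
      have hjm' : (j:ℝ) < (m:ℝ) := by
        have := mul_lt_mul_iff_of_pos_right hδ |>.mp (by linarith : (j:ℝ)*δ < (m:ℝ)*δ)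
        exact this
      exact_mod_cast Nat.add_one_le_iff.mpr (by exact_mod_cast hjm')
    have hstep : H (-K + (j+1:ℕ)*δ) - H (-K + j*δ) ≤ ε/4 := by
      have heq : -K + ((j:ℕ)+1:ℕ)*δ = (-K + (j:ℕ)*δ) + δ := by push_cast; ring
      rw [heq]
      exact hosc _
    rcases le_abs.mp ht with h | h
    · -- G t - H t ≥ ε, use j+1
      refine ⟨j+1, hjm, ?_⟩
      have hGt : G t ≤ G (-K + (j+1:ℕ)*δ) := hG hj2
      have hHjt : H (-K + j*δ) ≤ H t := hH hj1
      have : ε/2 ≤ G (-K + (j+1:ℕ)*δ) - H (-K + (j+1:ℕ)*δ) := by linarith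
      exact this.trans (le_abs_self _)
    · -- H t - G t ≥ ε, use j
      refine ⟨j, (Nat.le_succ j).trans hjm, ?_⟩
      have hGt : G (-K + j*δ) ≤ G t := hG hj1
      have hHjt : H t ≤ H (-K + (j+1:ℕ)*δ) := hH hj2
      have h1 : ε/2 ≤ H (-K + j*δ) - G (-K + j*δ) := by linarith
      calc ε/2 ≤ -(G (-K + j*δ) - H (-K + j*δ)) := by linarith
        _ ≤ |G (-K + j*δ) - H (-K + j*δ)| := neg_le_abs _

lemma avg_le {n : ℕ} (hn : 0 < n) {a : Fin n → ℝ} {b : ℝ} (h : ∀ i, a i ≤ b) :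
    (n:ℝ)⁻¹ * ∑ i, a i ≤ b := by
  have hnpos : (0:ℝ) < n := by exact_mod_cast hn
  have h1 : ∑ i, a i ≤ (n:ℝ) * b := by
    calc ∑ i, a i ≤ ∑ _i : Fin n, b := Finset.sum_le_sum fun i _ => h i
      _ = (n:ℝ) * b := by rw [Finset.sum_const, Finset.card_univ, Fintype.card_fin,
            nsmul_eq_mul]
  calc (n:ℝ)⁻¹ * ∑ i, a i ≤ (n:ℝ)⁻¹ * ((n:ℝ) * b) := by
        exact mul_le_mul_of_nonneg_left h1 (by positivity)
    _ = b := inv_mul_cancel_left₀ (by positivity) b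

lemma le_avg {n : ℕ} (hn : 0 < n) {a : Fin n → ℝ} {b : ℝ} (h : ∀ i, b ≤ a i) :
    b ≤ (n:ℝ)⁻¹ * ∑ i, a i := by
  have hnpos : (0:ℝ) < n := by exact_mod_cast hn
  have h1 : (n:ℝ) * b ≤ ∑ i, a i := by
    calc (n:ℝ) * b = ∑ _i : Fin n, b := by
          rw [Finset.sum_const, Finset.card_univ, Fintype.card_fin, nsmul_eq_mul]
      _ ≤ ∑ i, a i := Finset.sum_le_sum fun i _ => h i
  calc b = (n:ℝ)⁻¹ * ((n:ℝ) * b) := (inv_mul_cancel_left₀ (by positivity) b).symm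
    _ ≤ (n:ℝ)⁻¹ * ∑ i, a i := mul_le_mul_of_nonneg_left h1 (by positivity)

theorem glivenko_cantelli_triangular_array
    {Ω : Type*} [MeasurableSpace Ω] (μ : Measure Ω) [IsProbabilityMeasure μ]
    (Y : (n : ℕ) → Fin n → Ω → ℝ)
    (hmeas : ∀ n i, Measurable (Y n i))
    (hindep : ∀ n, ProbabilityTheory.iIndepFun (Y n) μ)
    (F : (n : ℕ) → Fin n → ℝ → ℝ)
    (hF : ∀ n i t, F n i t = (μ {ω | Y n i ω ≤ t}).toReal)
    (htight : ∀ ε > 0, ∃ K : ℝ, ∀ n, ∀ i : Fin n,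
      1 - ε ≤ F n i K ∧ F n i (-K) ≤ ε)
    (hequi : ∀ ε > 0, ∃ δ > 0, ∀ n, ∀ i : Fin n, ∀ t,
      F n i (t + δ) - F n i t ≤ ε) :
    ∀ ε > 0,
      Tendsto (fun n : ℕ => μ {ω | ∃ t : ℝ,
          ε ≤ |(n : ℝ)⁻¹ * ∑ i : Fin n, (if Y n i ω ≤ t then (1:ℝ) else 0)
                - (n : ℝ)⁻¹ * ∑ i : Fin n, F n i t|})
        atTop (nhds 0) := by
  intro ε hε
  obtain ⟨δ, hδ, hosc⟩ := hequi (ε/4) (by positivity)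
  obtain ⟨K, hK⟩ := htight (ε/4) (by positivity)
  set m := ⌈2*K/δ⌉₊ with hm
  -- basic facts about F
  have hF0 : ∀ n (i : Fin n) t, 0 ≤ F n i t := by
    intro n i t; rw [hF]; exact ENNReal.toReal_nonneg
  have hF1 : ∀ n (i : Fin n) t, F n i t ≤ 1 := by
    intro n i t; rw [hF]
    have h1 := ENNReal.toReal_mono (ENNReal.one_ne_top) (prob_le_one (μ := μ) (s := {ω | Y n i ω ≤ t}))
    simpa using h1
  have hFmono : ∀ n (i : Fin n), Monotone (F n i) := by
    intro n i s t hst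
    rw [hF, hF]
    exact ENNReal.toReal_mono (measure_ne_top μ _)
      (measure_mono (fun ω h => le_trans h hst))
  -- key bound for n ≥ 1
  have key : ∀ n : ℕ, 1 ≤ n →
      μ {ω | ∃ t : ℝ,
          ε ≤ |(n : ℝ)⁻¹ * ∑ i : Fin n, (if Y n i ω ≤ t then (1:ℝ) else 0)
                - (n : ℝ)⁻¹ * ∑ i : Fin n, F n i t|}
        ≤ ((m+1 : ℕ) : ENNReal) * ENNReal.ofReal (1/(n*(ε/2)^2)) := by
    intro n hn
    have hn0 : 0 < n := hn
    have hnpos : (0:ℝ) < n := by exact_mod_cast hn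
    set G : Ω → ℝ → ℝ :=
      fun ω t => (n : ℝ)⁻¹ * ∑ i : Fin n, (if Y n i ω ≤ t then (1:ℝ) else 0) with hGdef
    set Hav : ℝ → ℝ := fun t => (n : ℝ)⁻¹ * ∑ i : Fin n, F n i t with hHdef
    set A : Fin (m+1) → Set Ω :=
      fun j => {ω | ε/2 ≤ |G ω (-K + (j:ℕ)*δ) - Hav (-K + (j:ℕ)*δ)|} with hA
    have hsub : {ω | ∃ t : ℝ,
          ε ≤ |(n : ℝ)⁻¹ * ∑ i : Fin n, (if Y n i ω ≤ t then (1:ℝ) else 0)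
                - (n : ℝ)⁻¹ * ∑ i : Fin n, F n i t|} ⊆ ⋃ j : Fin (m+1), A j := by
      rintro ω ⟨t, ht⟩
      have hGmono : Monotone (G ω) := by
        intro s u hsu
        refine mul_le_mul_of_nonneg_left (Finset.sum_le_sum fun i _ => ?_) (by positivity)
        by_cases h : Y n i ω ≤ s
        · simp [h, le_trans h hsu]
        · simp only [h, if_false]
          split <;> norm_num
      have hHmono : Monotone Hav := by
        intro s u hsu
        exact mul_le_mul_of_nonneg_left
          (Finset.sum_le_sum fun i _ => hFmono n i hsu) (by positivity)
      have hG0 : ∀ s, 0 ≤ G ω s := by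
        intro s
        refine mul_nonneg (by positivity) (Finset.sum_nonneg fun i _ => ?_)
        split <;> norm_num
      have hG1 : ∀ s, G ω s ≤ 1 := by
        intro s
        exact avg_le hn0 (fun i => by split <;> norm_num)
      have hH0 : ∀ s, 0 ≤ Hav s :=
        fun s => mul_nonneg (by positivity) (Finset.sum_nonneg fun i _ => hF0 n i s)
      have hH1 : ∀ s, Hav s ≤ 1 := fun s => avg_le hn0 (fun i => hF1 n i s)
      have hlow : Hav (-K) ≤ ε/4 := avg_le hn0 (fun i => (hK n i).2)
      have hhigh : 1 - ε/4 ≤ Hav K := le_avg hn0 (fun i => (hK n i).1)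
      have hoscH : ∀ s, Hav (s + δ) - Hav s ≤ ε/4 := by
        intro s
        rw [hHdef]
        simp only
        rw [← mul_sub, ← Finset.sum_sub_distrib]
        exact avg_le hn0 (fun i => hosc n i s)
      obtain ⟨j, hj, hja⟩ := grid_reduction (G ω) Hav hGmono hHmono hG0 hG1 hH0 hH1
        hε hδ hlow hhigh hoscH t ht
      exact Set.mem_iUnion.mpr ⟨⟨j, by omega⟩, hja⟩
    calc μ _ ≤ μ (⋃ j : Fin (m+1), A j) := measure_mono hsub
      _ ≤ ∑ j : Fin (m+1), μ (A j) := measure_iUnion_fintype_le μ A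
      _ ≤ ∑ _j : Fin (m+1), ENNReal.ofReal (1/(n*(ε/2)^2)) := by
          refine Finset.sum_le_sum fun j _ => ?_
          have hch := cheb_point μ (Y n) (hmeas n) (hindep n) (-K + (j:ℕ)*δ)
            (c := ε/2) (by positivity) hn0
          rw [hA]
          simp only [hGdef, hHdef, Set.mem_setOf_eq]
          simp only [hF]
          exact hch
      _ = ((m+1 : ℕ) : ENNReal) * ENNReal.ofReal (1/(n*(ε/2)^2)) := by
          rw [Finset.sum_const, Finset.card_univ, Fintype.card_fin, nsmul_eq_mul]
  -- limit of the bound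
  have hb : Tendsto (fun n : ℕ => ((m+1 : ℕ) : ENNReal) * ENNReal.ofReal (1/(n*(ε/2)^2)))
      atTop (nhds 0) := by
    have h1 : Tendsto (fun n : ℕ => ((1/((ε/2)^2) : ℝ))/ (n:ℝ)) atTop (nhds 0) :=
      tendsto_const_div_atTop_nhds_zero_nat _
    have h2 : Tendsto (fun n : ℕ => ENNReal.ofReal ((1:ℝ)/(n*(ε/2)^2))) atTop (nhds 0) := by
      have heq : ∀ n : ℕ, (1:ℝ)/(n*(ε/2)^2) = (1/((ε/2)^2))/(n:ℝ) := by
        intro n; rw [div_div]; ring_nf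
      simp only [heq]
      simpa using ENNReal.tendsto_ofReal h1
    have := ENNReal.Tendsto.const_mul h2
      (Or.inr (by simp : ((m+1 : ℕ) : ENNReal) ≠ ⊤))
    simpa using this
  exact tendsto_of_tendsto_of_tendsto_of_le_of_le' tendsto_const_nhds hb
    (Filter.Eventually.of_forall fun n => zero_le)
    (Filter.eventually_atTop.mpr ⟨1, key⟩)
end

section
/- Let {B_{i,n} : i ≤ n} be row-wise independent random variables with |B_{i,n}| ≤ K and E[B_{i,n}] = 0, and let {f_{i,n} : i ≤ n, n ≥ 1} be functions on [0,1] that are uniformly bounded and uniformly equicontinuous. Then sup_{t∈[0,1]} |(1/n) Σ_{i=1}^n B_{i,n} f_{i,n}(t)| → 0 in probability as n → ∞. -/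
open MeasureTheory Set Filter

theorem random_coefficients_uniform_lln
    {Ω : Type*} [MeasurableSpace Ω] (μ : Measure Ω) [IsProbabilityMeasure μ]
    (B : (n : ℕ) → Fin n → Ω → ℝ) (K : ℝ) (hK : 0 < K)
    (hmeas : ∀ n i, Measurable (B n i))
    (hindep : ∀ n, ProbabilityTheory.iIndepFun (B n) μ)
    (hbd : ∀ n i, ∀ᵐ ω ∂μ, |B n i ω| ≤ K)
    (hcentered : ∀ n i, ∫ ω, B n i ω ∂μ = 0)
    (f : (n : ℕ) → Fin n → ℝ → ℝ) (C : ℝ)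
    (hfbd : ∀ n, ∀ i : Fin n, ∀ t ∈ Set.Icc (0:ℝ) 1, |f n i t| ≤ C)
    (hfequi : ∀ ε > 0, ∃ δ > 0, ∀ n, ∀ i : Fin n,
      ∀ s ∈ Set.Icc (0:ℝ) 1, ∀ t ∈ Set.Icc (0:ℝ) 1,
        |t - s| ≤ δ → |f n i t - f n i s| ≤ ε) :
    ∀ ε > 0,
      Tendsto (fun n : ℕ => μ {ω | ∃ t ∈ Set.Icc (0:ℝ) 1,
          ε ≤ |(n : ℝ)⁻¹ * ∑ i : Fin n, B n i ω * f n i t|})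
        atTop (nhds 0) := by
  intro ε hε
  have hC0 : 0 ≤ C := le_trans (abs_nonneg _) (hfbd 1 0 0 (by norm_num))
  obtain ⟨δ, hδ, hδf⟩ := hfequi (ε / (2 * K)) (by positivity)
  set m : ℕ := ⌈1 / δ⌉₊ with hm
  set g : Fin (m + 1) → ℝ := fun j => min ((j : ℕ) * δ) 1 with hg
  have hgmem : ∀ j, g j ∈ Set.Icc (0:ℝ) 1 := by
    intro j
    constructor
    · exact le_min (by positivity) zero_le_one
    · exact min_le_right _ _
  have hcover : ∀ t ∈ Set.Icc (0:ℝ) 1, ∃ j : Fin (m+1), |t - g j| ≤ δ := by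
    intro t ht
    have htδ : 0 ≤ t / δ := div_nonneg ht.1 hδ.le
    set j0 : ℕ := ⌊t / δ⌋₊ with hj0
    have hj0le : (j0 : ℝ) ≤ t / δ := Nat.floor_le htδ
    have hj0m : j0 ≤ m := by
      have h1 : (j0 : ℝ) ≤ 1 / δ := hj0le.trans (by gcongr; exact ht.2)
      have h2 : (1 : ℝ) / δ ≤ (m : ℝ) := Nat.le_ceil _
      exact_mod_cast Nat.cast_le.mp (h1.trans h2)
    refine ⟨⟨j0, by omega⟩, ?_⟩
    have hj0δ : (j0 : ℝ) * δ ≤ t := by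
      rw [← le_div_iff₀ hδ]; exact hj0le
    have hgj : g ⟨j0, by omega⟩ = (j0 : ℝ) * δ := by
      simp only [hg]
      exact min_eq_left (hj0δ.trans ht.2)
    rw [hgj, abs_of_nonneg (by linarith)]
    have : t / δ < j0 + 1 := Nat.lt_floor_add_one _
    have : t < ((j0 : ℝ) + 1) * δ := by
      rw [← div_lt_iff₀ hδ]; exact this
    linarith [this]
  -- Chebyshev at a fixed point
  have key : ∀ n : ℕ, n ≠ 0 → ∀ s ∈ Set.Icc (0:ℝ) 1,
      μ {ω | ε/2 ≤ |(n : ℝ)⁻¹ * ∑ i : Fin n, B n i ω * f n i s|}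
        ≤ ENNReal.ofReal ((K*C)^2 / (ε/2)^2 / n) := by
    intro n hn s hs
    have hnpos : (0:ℝ) < n := Nat.cast_pos.mpr (Nat.pos_of_ne_zero hn)
    set Y : Fin n → Ω → ℝ := fun i ω => B n i ω * f n i s with hY
    have hYmeas : ∀ i, Measurable (Y i) := fun i => (hmeas n i).mul_const _
    have hYbd : ∀ i, ∀ᵐ ω ∂μ, |Y i ω| ≤ K * C := by
      intro i
      filter_upwards [hbd n i] with ω hω
      rw [hY]
      simp only [abs_mul]
      exact mul_le_mul hω (hfbd n i s hs) (abs_nonneg _) hK.le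
    have hYmem : ∀ i, MemLp (Y i) 2 μ := by
      intro i
      refine MemLp.of_bound (hYmeas i).aestronglyMeasurable (K*C) ?_
      filter_upwards [hYbd i] with ω hω using by rwa [Real.norm_eq_abs]
    have hYint : ∀ i, Integrable (Y i) μ := fun i => (hYmem i).integrable one_le_two
    have hYmean : ∀ i, ∫ ω, Y i ω ∂μ = 0 := by
      intro i
      rw [hY]
      simp only
      rw [integral_mul_const, hcentered n i, zero_mul]
    have hYvar : ∀ i, ProbabilityTheory.variance (Y i) μ ≤ (K*C)^2 := by
      intro i
      refine (ProbabilityTheory.variance_le_expectation_sq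
        (hYmeas i).aestronglyMeasurable).trans ?_
      have hint : Integrable (fun ω => Y i ω ^ 2) μ := (hYmem i).integrable_sq
      calc ∫ ω, (Y i ^ 2) ω ∂μ ≤ ∫ _ω, (K*C)^2 ∂μ := by
            refine integral_mono_ae hint (integrable_const _) ?_
            filter_upwards [hYbd i] with ω hω
            simpa [sq_abs] using pow_le_pow_left₀ (abs_nonneg _) hω 2
        _ = (K*C)^2 := by simp
    set S : Ω → ℝ := ∑ i : Fin n, Y i with hS
    have hSmean : ∫ ω, S ω ∂μ = 0 := by
      rw [hS]
      simp only [Finset.sum_apply]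
      rw [integral_finset_sum _ (fun i _ => hYint i)]
      simp [hYmean]
    have hSmem : MemLp S 2 μ := memLp_finset_sum' _ (fun i _ => hYmem i)
    have hSvar : ProbabilityTheory.variance S μ ≤ n * (K*C)^2 := by
      rw [hS, ProbabilityTheory.IndepFun.variance_sum (fun i _ => hYmem i)
        (fun i _ j _ hij => ((hindep n).indepFun hij).comp
          (measurable_mul_const (f n i s)) (measurable_mul_const (f n j s)))]
      calc ∑ i : Fin n, ProbabilityTheory.variance (Y i) μ
          ≤ ∑ _i : Fin n, (K*C)^2 := Finset.sum_le_sum (fun i _ => hYvar i)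
        _ = n * (K*C)^2 := by simp [mul_comm]
    have hcheb := ProbabilityTheory.meas_ge_le_variance_div_sq (μ := μ) hSmem
      (c := n * (ε/2)) (by positivity)
    have hset : {ω | ε/2 ≤ |(n : ℝ)⁻¹ * ∑ i : Fin n, B n i ω * f n i s|}
        = {ω | n * (ε/2) ≤ |S ω - ∫ ω', S ω' ∂μ|} := by
      ext ω
      simp only [Set.mem_setOf_eq, hSmean, sub_zero]
      have hSω : S ω = ∑ i : Fin n, B n i ω * f n i s := by
        rw [hS]; simp [hY]
      rw [hSω, abs_mul, abs_inv, abs_of_nonneg hnpos.le,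
        inv_mul_eq_div, le_div_iff₀ hnpos, mul_comm]
    rw [hset]
    refine hcheb.trans (ENNReal.ofReal_le_ofReal ?_)
    have heq : (n : ℝ) * (K*C)^2 / ((n:ℝ)*(ε/2))^2 = (K*C)^2 / (ε/2)^2 / n := by
      field_simp
    calc ProbabilityTheory.variance S μ / ((n:ℝ)*(ε/2))^2
        ≤ ((n:ℝ) * (K*C)^2) / ((n:ℝ)*(ε/2))^2 := by gcongr
      _ = _ := heq
  -- main bound
  set D : ℝ := (m + 1 : ℕ) * ((K*C)^2 / (ε/2)^2) with hD
  have main : ∀ n : ℕ, n ≠ 0 →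
      μ {ω | ∃ t ∈ Set.Icc (0:ℝ) 1,
          ε ≤ |(n : ℝ)⁻¹ * ∑ i : Fin n, B n i ω * f n i t|}
        ≤ ENNReal.ofReal (D / n) := by
    intro n hn
    have hnpos : (0:ℝ) < n := Nat.cast_pos.mpr (Nat.pos_of_ne_zero hn)
    set A : Fin (m+1) → Set Ω := fun j =>
      {ω | ε/2 ≤ |(n : ℝ)⁻¹ * ∑ i : Fin n, B n i ω * f n i (g j)|} with hA
    set N : Set Ω := {ω | ¬ ∀ i : Fin n, |B n i ω| ≤ K} with hN
    have hNnull : μ N = 0 := by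
      have : ∀ᵐ ω ∂μ, ∀ i : Fin n, |B n i ω| ≤ K := ae_all_iff.2 (hbd n)
      exact this
    have hsub : {ω | ∃ t ∈ Set.Icc (0:ℝ) 1,
        ε ≤ |(n : ℝ)⁻¹ * ∑ i : Fin n, B n i ω * f n i t|}
        ⊆ (⋃ j, A j) ∪ N := by
      intro ω hω
      obtain ⟨t, ht, hεt⟩ := hω
      by_cases hB : ∀ i : Fin n, |B n i ω| ≤ K
      · left
        obtain ⟨j, hj⟩ := hcover t ht
        refine Set.mem_iUnion.2 ⟨j, ?_⟩
        have hdiff : |(n : ℝ)⁻¹ * ∑ i : Fin n, B n i ω * f n i t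
            - (n : ℝ)⁻¹ * ∑ i : Fin n, B n i ω * f n i (g j)| ≤ ε/2 := by
          rw [← mul_sub, ← Finset.sum_sub_distrib]
          have hterm : ∀ i : Fin n,
              |B n i ω * f n i t - B n i ω * f n i (g j)| ≤ K * (ε / (2 * K)) := by
            intro i
            rw [← mul_sub, abs_mul]
            exact mul_le_mul (hB i) (hδf n i (g j) (hgmem j) t ht hj)
              (abs_nonneg _) hK.le
          have hKε : K * (ε / (2 * K)) = ε / 2 := by
            field_simp
          calc |(n : ℝ)⁻¹ * ∑ i : Fin n, (B n i ω * f n i t - B n i ω * f n i (g j))|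
              ≤ (n : ℝ)⁻¹ * ∑ i : Fin n, |B n i ω * f n i t - B n i ω * f n i (g j)| := by
                rw [abs_mul, abs_inv, abs_of_nonneg hnpos.le]
                exact mul_le_mul_of_nonneg_left
                  (Finset.abs_sum_le_sum_abs _ _) (by positivity)
            _ ≤ (n : ℝ)⁻¹ * ∑ _i : Fin n, (ε/2) := by
                rw [hKε] at hterm
                exact mul_le_mul_of_nonneg_left
                  (Finset.sum_le_sum (fun i _ => hterm i)) (by positivity)
            _ = ε/2 := by
                rw [Finset.sum_const]
                simp [Finset.card_univ]
                field_simp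
        have := abs_sub_abs_le_abs_sub ((n : ℝ)⁻¹ * ∑ i : Fin n, B n i ω * f n i t)
          ((n : ℝ)⁻¹ * ∑ i : Fin n, B n i ω * f n i (g j))
        simp only [hA, Set.mem_setOf_eq]
        linarith
      · right
        exact hB
    calc μ {ω | ∃ t ∈ Set.Icc (0:ℝ) 1,
          ε ≤ |(n : ℝ)⁻¹ * ∑ i : Fin n, B n i ω * f n i t|}
        ≤ μ ((⋃ j, A j) ∪ N) := measure_mono hsub
      _ ≤ μ (⋃ j, A j) + μ N := measure_union_le _ _
      _ = μ (⋃ j, A j) := by rw [hNnull, add_zero]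
      _ ≤ ∑ j : Fin (m+1), μ (A j) := measure_iUnion_fintype_le μ A
      _ ≤ ∑ _j : Fin (m+1), ENNReal.ofReal ((K*C)^2 / (ε/2)^2 / n) :=
          Finset.sum_le_sum (fun j _ => key n hn (g j) (hgmem j))
      _ = ((m+1 : ℕ) : ENNReal) * ENNReal.ofReal ((K*C)^2 / (ε/2)^2 / n) := by
          rw [Finset.sum_const, Finset.card_univ, Fintype.card_fin, nsmul_eq_mul]
      _ = ENNReal.ofReal (D / n) := by
          rw [← ENNReal.ofReal_natCast (m+1), ← ENNReal.ofReal_mul (by positivity)]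
          congr 1
          rw [hD]
          ring
  -- squeeze
  have h1 : Tendsto (fun n : ℕ => ENNReal.ofReal (D / n)) atTop (nhds 0) := by
    rw [show (0 : ENNReal) = ENNReal.ofReal 0 by simp]
    exact (ENNReal.continuous_ofReal.tendsto 0).comp
      (tendsto_const_div_atTop_nhds_zero_nat D)
  refine tendsto_of_tendsto_of_tendsto_of_le_of_le' tendsto_const_nhds h1 ?_ ?_
  · filter_upwards with n using zero_le
  · filter_upwards [eventually_ge_atTop 1] with n hn using main n (by omega)
end

section
/- (Expectation bound for the sup of a Lipschitz-parametrized centered sum) Let B_1,…,B_n be independent centered random variables with |B_i| ≤ K a.s., and let f_1,…,f_n : [−t_0,t_0] → ℝ be L-Lipschitz with f_i(0)=0. Then there is a universal constant C such that E[ sup_{|t|≤t_0} |(1/n)Σ_{i=1}^n B_i f_i(t)| ] ≤ C·K·L·t_0/√n. -/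
open MeasureTheory Set

section Aux

open ProbabilityTheory

variable {Ω : Type} [MeasurableSpace Ω] {μ : Measure Ω}

lemma aux_abs_integral_le_sqrt [IsProbabilityMeasure μ] {Y : Ω → ℝ}
    (hY : Integrable Y μ) (hY2 : Integrable (fun ω => Y ω ^ 2) μ) :
    ∫ ω, |Y ω| ∂μ ≤ Real.sqrt (∫ ω, Y ω ^ 2 ∂μ) := by
  set m := ∫ ω, |Y ω| ∂μ with hm_def
  have hm : 0 ≤ m := integral_nonneg fun ω => abs_nonneg _
  have habs : Integrable (fun ω => |Y ω|) μ := hY.abs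
  have hI2 : 0 ≤ ∫ ω, Y ω ^ 2 ∂μ := integral_nonneg fun ω => sq_nonneg _
  have h0 : 0 ≤ ∫ ω, (|Y ω| - m) ^ 2 ∂μ := integral_nonneg fun ω => sq_nonneg _
  have hexp : ∫ ω, (|Y ω| - m) ^ 2 ∂μ = (∫ ω, Y ω ^ 2 ∂μ) - m ^ 2 := by
    have heq : ∀ ω, (|Y ω| - m) ^ 2 = Y ω ^ 2 - (2 * m) * |Y ω| + m ^ 2 := by
      intro ω
      have : |Y ω| ^ 2 = Y ω ^ 2 := sq_abs _
      nlinarith [this]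
    simp_rw [heq]
    have i1 : Integrable (fun ω => (2 * m) * |Y ω|) μ := habs.const_mul (2 * m)
    have i2 : Integrable (fun ω => Y ω ^ 2 - (2 * m) * |Y ω|) μ := hY2.sub i1
    rw [integral_add i2 (integrable_const _), integral_sub hY2 i1,
      integral_const_mul, integral_const]
    simp only [probReal_univ, ENNReal.toReal_one, smul_eq_mul, one_mul]
    rw [← hm_def]; ring
  rw [(Real.le_sqrt hm hI2)]
  nlinarith [h0, hexp]

lemma aux_sum_bound [IsProbabilityMeasure μ]
    {n : ℕ} {B : Fin n → Ω → ℝ} {K : ℝ} (hK : 0 ≤ K)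
    (hmeas : ∀ i, Measurable (B i))
    (hindep : iIndepFun B μ)
    (hbdd : ∀ i, ∀ᵐ ω ∂μ, |B i ω| ≤ K)
    (hmean : ∀ i, ∫ ω, B i ω ∂μ = 0)
    {a : Fin n → ℝ} {c : ℝ} (hc : 0 ≤ c) (ha : ∀ i, |a i| ≤ c) :
    ∫ ω, |∑ i, B i ω * a i| ∂μ ≤ Real.sqrt n * K * c := by
  have intB : ∀ i, Integrable (B i) μ := fun i =>
    (integrable_const K).mono' (hmeas i).aestronglyMeasurable
      ((hbdd i).mono fun ω h => by simpa using h)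
  have intBB : ∀ i j, Integrable (fun ω => B i ω * B j ω) μ := by
    intro i j
    refine (integrable_const (K * K)).mono'
      (((hmeas i).mul (hmeas j)).aestronglyMeasurable) ?_
    filter_upwards [hbdd i, hbdd j] with ω h1 h2
    rw [Real.norm_eq_abs, abs_mul]
    exact mul_le_mul h1 h2 (abs_nonneg _) hK
  set S : Ω → ℝ := fun ω => ∑ i, B i ω * a i with hS_def
  have hSmeas : Measurable S := by
    apply Finset.measurable_sum
    intro i _
    exact (hmeas i).mul_const _
  have hSint : Integrable S μ := by
    apply integrable_finset_sum
    intro i _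
    exact (intB i).mul_const _
  have hsq : ∀ ω, S ω ^ 2 = ∑ i, ∑ j, (a i * a j) * (B i ω * B j ω) := by
    intro ω
    rw [sq, hS_def]
    rw [Finset.sum_mul_sum]
    refine Finset.sum_congr rfl fun i _ => Finset.sum_congr rfl fun j _ => by ring
  have hS2int : Integrable (fun ω => S ω ^ 2) μ := by
    simp_rw [hsq]
    apply integrable_finset_sum; intro i _
    apply integrable_finset_sum; intro j _
    exact (intBB i j).const_mul _
  have hMzero : ∀ i j, i ≠ j → ∫ ω, B i ω * B j ω ∂μ = 0 := by
    intro i j hij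
    have h := (hindep.indepFun hij).integral_mul_eq_mul_integral (hmeas i).aestronglyMeasurable
      (hmeas j).aestronglyMeasurable
    have : ∫ ω, B i ω * B j ω ∂μ = ∫ ω, (B i * B j) ω ∂μ := rfl
    rw [this, h, hmean i, hmean j, mul_zero]
  have hMii : ∀ i, ∫ ω, B i ω * B i ω ∂μ ≤ K * K := by
    intro i
    have : ∫ ω, (K : ℝ) * K ∂μ = K * K := by
      rw [integral_const]; simp [measure_univ]
    rw [← this]
    refine integral_mono_ae (intBB i i) (integrable_const _) ?_
    filter_upwards [hbdd i] with ω h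
    have : |B i ω * B i ω| ≤ K * K := by
      rw [abs_mul]; exact mul_le_mul h h (abs_nonneg _) hK
    exact le_trans (le_abs_self _) this
  have hMnonneg : ∀ i, 0 ≤ ∫ ω, B i ω * B i ω ∂μ := by
    intro i
    apply integral_nonneg
    intro ω
    exact mul_self_nonneg _
  have hS2 : ∫ ω, S ω ^ 2 ∂μ ≤ (n : ℝ) * (K * K * (c * c)) := by
    simp_rw [hsq]
    rw [integral_finset_sum _ (fun i _ => integrable_finset_sum _
      (fun j _ => (intBB i j).const_mul _))]
    have : ∀ i : Fin n, ∫ ω, ∑ j, (a i * a j) * (B i ω * B j ω) ∂μ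
        ≤ K * K * (c * c) := by
      intro i
      rw [integral_finset_sum _ (fun j _ => (intBB i j).const_mul _)]
      have hterm : ∀ j : Fin n, ∫ ω, (a i * a j) * (B i ω * B j ω) ∂μ
          = (a i * a j) * ∫ ω, B i ω * B j ω ∂μ := fun j => integral_const_mul _ _
      simp_rw [hterm]
      rw [Finset.sum_eq_single i]
      · have h1 : a i * a i ≤ c * c := by
          have := ha i
          nlinarith [abs_nonneg (a i), neg_abs_le (a i), le_abs_self (a i)]
        have h2 : 0 ≤ a i * a i := mul_self_nonneg _
        calc a i * a i * ∫ ω, B i ω * B i ω ∂μ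
            ≤ (c * c) * (K * K) :=
              mul_le_mul h1 (hMii i) (hMnonneg i) (by positivity)
          _ = K * K * (c * c) := by ring
      · intro j _ hji
        rw [hMzero i j (Ne.symm hji), mul_zero]
      · intro h; exact absurd (Finset.mem_univ i) h
    calc ∑ i, ∫ ω, ∑ j, (a i * a j) * (B i ω * B j ω) ∂μ
        ≤ ∑ _i : Fin n, (K * K * (c * c)) := Finset.sum_le_sum fun i _ => this i
      _ = (n : ℝ) * (K * K * (c * c)) := by
          rw [Finset.sum_const, Finset.card_univ, Fintype.card_fin, nsmul_eq_mul]
  calc ∫ ω, |S ω| ∂μ ≤ Real.sqrt (∫ ω, S ω ^ 2 ∂μ) :=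
        aux_abs_integral_le_sqrt hSint hS2int
    _ ≤ Real.sqrt ((n : ℝ) * (K * K * (c * c))) := Real.sqrt_le_sqrt hS2
    _ = Real.sqrt n * K * c := by
        rw [Real.sqrt_mul (Nat.cast_nonneg n)]
        rw [show K * K * (c * c) = (K * c) ^ 2 by ring, Real.sqrt_sq (by positivity)]
        ring

end Aux

theorem expected_sup_bound_lipschitz_sum :
    ∃ C : ℝ, 0 < C ∧
      ∀ (Ω : Type) (_ : MeasurableSpace Ω) (μ : Measure Ω),
        IsProbabilityMeasure μ →
        ∀ (n : ℕ), 0 < n →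
        ∀ (B : Fin n → Ω → ℝ) (K L t₀ : ℝ), 0 < K → 0 ≤ L → 0 < t₀ →
        (∀ i, Measurable (B i)) →
        ProbabilityTheory.iIndepFun B μ →
        (∀ i, ∀ᵐ ω ∂μ, |B i ω| ≤ K) →
        (∀ i, ∫ ω, B i ω ∂μ = 0) →
        ∀ (f : Fin n → ℝ → ℝ),
        (∀ i, ∀ s ∈ Set.Icc (-t₀) t₀, ∀ t ∈ Set.Icc (-t₀) t₀,
          |f i t - f i s| ≤ L * |t - s|) →
        (∀ i, f i 0 = 0) →
        ∫ ω, (⨆ t : Set.Icc (-t₀) t₀, |(n : ℝ)⁻¹ * ∑ i, B i ω * f i (t : ℝ)|) ∂μ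
          ≤ C * K * L * t₀ / Real.sqrt n := by
  refine ⟨5, by norm_num, ?_⟩
  intro Ω mΩ μ hμ n hn B K L t₀ hK hL ht₀ hmeas hindep hbdd hmean f hlip hf0
  have hn' : (0:ℝ) < n := Nat.cast_pos.mpr hn
  have hh : 0 < t₀ / n := div_pos ht₀ hn'
  set h : ℝ := t₀ / n with hh_def
  set s : ℕ → ℝ := fun j => -t₀ + j * h with hs_def
  have h2nh : (2 * (n:ℝ)) * h = 2 * t₀ := by
    rw [hh_def]; field_simp
  have hs_mem : ∀ j, j ≤ 2 * n → s j ∈ Set.Icc (-t₀) t₀ := by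
    intro j hj
    have hj' : (j:ℝ) ≤ 2 * n := by exact_mod_cast hj
    have h1 : (0:ℝ) ≤ (j:ℝ) * h := by positivity
    have h2 : (j:ℝ) * h ≤ (2 * (n:ℝ)) * h := by
      apply mul_le_mul_of_nonneg_right hj' hh.le
    constructor
    · simp only [hs_def]; linarith
    · simp only [hs_def]; linarith [h2nh]
  have hs_n : s n = 0 := by
    simp only [hs_def, hh_def]
    field_simp
    ring
  let X : ℝ → Ω → ℝ := fun t ω => (n:ℝ)⁻¹ * ∑ i, B i ω * f i t
  have hX_diff : ∀ u v : ℝ, ∀ ω, X u ω - X v ω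
      = (n:ℝ)⁻¹ * ∑ i, B i ω * (f i u - f i v) := by
    intro u v ω
    show (n:ℝ)⁻¹ * ∑ i, B i ω * f i u - (n:ℝ)⁻¹ * ∑ i, B i ω * f i v = _
    rw [← mul_sub, ← Finset.sum_sub_distrib]
    congr 1
    exact Finset.sum_congr rfl fun i _ => by ring
  have intB : ∀ i, Integrable (B i) μ := fun i =>
    (integrable_const K).mono' (hmeas i).aestronglyMeasurable
      ((hbdd i).mono fun ω hb => by simpa using hb)
  have intX : ∀ t, Integrable (X t) μ := fun t =>
    (integrable_finset_sum _ fun i _ => (intB i).mul_const _).const_mul _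
  have intΔ : ∀ j : ℕ, Integrable (fun ω => |X (s (j+1)) ω - X (s j) ω|) μ :=
    fun j => ((intX _).sub (intX _)).abs
  set G : Ω → ℝ := fun ω =>
    2 * (∑ j ∈ Finset.range (2*n), |X (s (j+1)) ω - X (s j) ω|) + K*L*h with hG_def
  have intG : Integrable G μ :=
    ((integrable_finset_sum _ fun j _ => intΔ j).const_mul 2).add (integrable_const _)
  -- bound on each increment's expectation
  have ha_bound : ∀ j, j < 2*n → ∀ i, |f i (s (j+1)) - f i (s j)| ≤ L * h := by
    intro j hj i
    have h1 := hlip i (s j) (hs_mem j (by omega)) (s (j+1)) (hs_mem (j+1) (by omega))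
    have h2 : s (j+1) - s j = h := by
      simp only [hs_def]; push_cast; ring
    rw [h2, abs_of_nonneg hh.le] at h1
    exact h1
  have hinc : ∀ j, j < 2*n → ∫ ω, |X (s (j+1)) ω - X (s j) ω| ∂μ
      ≤ (n:ℝ)⁻¹ * (Real.sqrt n * K * (L*h)) := by
    intro j hj
    have e1 : ∀ ω, |X (s (j+1)) ω - X (s j) ω|
        = (n:ℝ)⁻¹ * |∑ i, B i ω * (f i (s (j+1)) - f i (s j))| := by
      intro ω
      rw [hX_diff, abs_mul, abs_inv, Nat.abs_cast]
    simp_rw [e1]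
    rw [integral_const_mul]
    have := aux_sum_bound (μ := μ) hK.le hmeas hindep hbdd hmean
      (c := L * h) (by positivity) (ha_bound j hj)
    exact mul_le_mul_of_nonneg_left this (by positivity)
  have hrpos : 0 < Real.sqrt n := Real.sqrt_pos.mpr hn'
  have hr : Real.sqrt n * Real.sqrt n = n := Real.mul_self_sqrt hn'.le
  have hr1 : 1 ≤ Real.sqrt n := by
    rw [show (1:ℝ) = Real.sqrt 1 by simp]
    exact Real.sqrt_le_sqrt (by exact_mod_cast hn)
  -- integral of G
  have hGle : ∫ ω, G ω ∂μ ≤ 5 * K * L * t₀ / Real.sqrt n := by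
    have e2 : ∫ ω, G ω ∂μ = 2 * (∑ j ∈ Finset.range (2*n),
        ∫ ω, |X (s (j+1)) ω - X (s j) ω| ∂μ) + K*L*h := by
      simp only [hG_def]
      rw [integral_add ((integrable_finset_sum _ fun j _ => intΔ j).const_mul 2)
        (integrable_const _), integral_const_mul,
        integral_finset_sum _ (fun j _ => intΔ j), integral_const]
      simp [measure_univ]
    rw [e2]
    have hsum : ∑ j ∈ Finset.range (2*n), ∫ ω, |X (s (j+1)) ω - X (s j) ω| ∂μ
        ≤ 2 * (n:ℝ) * ((n:ℝ)⁻¹ * (Real.sqrt n * K * (L*h))) := by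
      calc ∑ j ∈ Finset.range (2*n), ∫ ω, |X (s (j+1)) ω - X (s j) ω| ∂μ
          ≤ ∑ _j ∈ Finset.range (2*n), ((n:ℝ)⁻¹ * (Real.sqrt n * K * (L*h))) :=
            Finset.sum_le_sum fun j hj => hinc j (Finset.mem_range.mp hj)
        _ = 2 * (n:ℝ) * ((n:ℝ)⁻¹ * (Real.sqrt n * K * (L*h))) := by
            rw [Finset.sum_const, Finset.card_range, nsmul_eq_mul]
            push_cast; ring
    have hstep : 2 * (2 * (n:ℝ) * ((n:ℝ)⁻¹ * (Real.sqrt n * K * (L*h)))) + K*L*h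
        ≤ 5 * K * L * t₀ / Real.sqrt n := by
      have hp : 2 * (2 * (n:ℝ) * ((n:ℝ)⁻¹ * (Real.sqrt n * K * (L*h))))
          = 4 * K * L * t₀ / Real.sqrt n := by
        rw [hh_def, eq_div_iff hrpos.ne']
        field_simp
        linear_combination (4 * L) * hr
      have hq : K * L * h ≤ K * L * t₀ / Real.sqrt n := by
        have hrn : Real.sqrt n ≤ (n:ℝ) := by nlinarith
        have h1 : K * L * h = K * L * t₀ / (n:ℝ) := by rw [hh_def]; ring
        rw [h1]
        gcongr
      calc 2 * (2 * (n:ℝ) * ((n:ℝ)⁻¹ * (Real.sqrt n * K * (L*h)))) + K*L*h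
          ≤ 4 * K * L * t₀ / Real.sqrt n + K * L * t₀ / Real.sqrt n := by
            rw [hp]; linarith
        _ = 5 * K * L * t₀ / Real.sqrt n := by ring
    calc 2 * (∑ j ∈ Finset.range (2*n), ∫ ω, |X (s (j+1)) ω - X (s j) ω| ∂μ) + K*L*h
        ≤ 2 * (2 * (n:ℝ) * ((n:ℝ)⁻¹ * (Real.sqrt n * K * (L*h)))) + K*L*h := by
          have := mul_le_mul_of_nonneg_left hsum (by norm_num : (0:ℝ) ≤ 2)
          linarith
      _ ≤ 5 * K * L * t₀ / Real.sqrt n := hstep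
  -- a.e. pointwise bound of the sup
  have : Nonempty (Set.Icc (-t₀) t₀) := ⟨⟨0, by constructor <;> linarith⟩⟩
  have hae : ∀ᵐ ω ∂μ, (⨆ t : Set.Icc (-t₀) t₀, |X (↑t) ω|) ≤ G ω := by
    have hball : ∀ᵐ ω ∂μ, ∀ i, |B i ω| ≤ K := ae_all_iff.mpr hbdd
    filter_upwards [hball] with ω hB
    apply ciSup_le
    rintro ⟨t, ht⟩
    simp only [Set.mem_Icc] at ht
    -- choose grid point
    obtain ⟨j, hj2n, hd0, hdh⟩ : ∃ j, j ≤ 2*n ∧ 0 ≤ t - s j ∧ t - s j ≤ h := by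
      have hnum : 0 ≤ (t + t₀) / h := div_nonneg (by linarith [ht.1]) hh.le
      refine ⟨⌊(t + t₀) / h⌋₊, ?_, ?_, ?_⟩
      · have hle : (t + t₀) / h ≤ ((2*n : ℕ) : ℝ) := by
          rw [div_le_iff₀ hh]
          push_cast
          linarith [h2nh, ht.2]
        calc ⌊(t + t₀) / h⌋₊ ≤ ⌊((2*n : ℕ) : ℝ)⌋₊ := Nat.floor_mono hle
          _ = 2*n := Nat.floor_natCast _
      · have := Nat.floor_le hnum
        rw [le_div_iff₀ hh] at this
        simp only [hs_def]
        linarith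
      · have := Nat.lt_floor_add_one ((t + t₀) / h)
        rw [div_lt_iff₀ hh] at this
        simp only [hs_def]
        linarith
    have hX0 : X (s n) ω = 0 := by
      rw [hs_n]
      show (n:ℝ)⁻¹ * ∑ i, B i ω * f i 0 = 0
      simp [hf0]
    -- telescoping
    have htel : |X (s j) ω| ≤ 2 * ∑ l ∈ Finset.range (2*n), |X (s (l+1)) ω - X (s l) ω| := by
      have e1 : ∀ k : ℕ, X (s k) ω - X (s 0) ω
          = ∑ l ∈ Finset.range k, (X (s (l+1)) ω - X (s l) ω) :=
        fun k => (Finset.sum_range_sub (fun l => X (s l) ω) k).symm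
      have e3 : X (s j) ω = (∑ l ∈ Finset.range j, (X (s (l+1)) ω - X (s l) ω))
          - (∑ l ∈ Finset.range n, (X (s (l+1)) ω - X (s l) ω)) := by
        rw [← e1 j, ← e1 n]
        have := hX0
        linarith [this]
      rw [e3]
      have hb1 : ∀ k : ℕ, k ≤ 2*n → |∑ l ∈ Finset.range k, (X (s (l+1)) ω - X (s l) ω)|
          ≤ ∑ l ∈ Finset.range (2*n), |X (s (l+1)) ω - X (s l) ω| := by
        intro k hk
        calc |∑ l ∈ Finset.range k, (X (s (l+1)) ω - X (s l) ω)|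
            ≤ ∑ l ∈ Finset.range k, |X (s (l+1)) ω - X (s l) ω| :=
              Finset.abs_sum_le_sum_abs _ _
          _ ≤ ∑ l ∈ Finset.range (2*n), |X (s (l+1)) ω - X (s l) ω| :=
              Finset.sum_le_sum_of_subset_of_nonneg
                (Finset.range_subset_range.mpr hk) (fun _ _ _ => abs_nonneg _)
      calc |(∑ l ∈ Finset.range j, (X (s (l+1)) ω - X (s l) ω))
            - (∑ l ∈ Finset.range n, (X (s (l+1)) ω - X (s l) ω))|
          ≤ |∑ l ∈ Finset.range j, (X (s (l+1)) ω - X (s l) ω)|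
            + |∑ l ∈ Finset.range n, (X (s (l+1)) ω - X (s l) ω)| := abs_sub _ _
        _ ≤ 2 * ∑ l ∈ Finset.range (2*n), |X (s (l+1)) ω - X (s l) ω| := by
            have := hb1 j hj2n
            have := hb1 n (by omega)
            linarith
    -- Lipschitz slack
    have hslack : |X t ω - X (s j) ω| ≤ K * L * h := by
      rw [hX_diff, abs_mul, abs_inv, Nat.abs_cast]
      have hin : |∑ i, B i ω * (f i t - f i (s j))| ≤ ∑ _i : Fin n, K * (L * h) := by
        refine (Finset.abs_sum_le_sum_abs _ _).trans (Finset.sum_le_sum ?_)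
        intro i _
        rw [abs_mul]
        have hfle := hlip i (s j) (hs_mem j hj2n) t ⟨ht.1, ht.2⟩
        have habs : |t - s j| ≤ h := by rw [abs_of_nonneg hd0]; exact hdh
        have hfle2 : |f i t - f i (s j)| ≤ L * h :=
          hfle.trans (mul_le_mul_of_nonneg_left habs hL)
        exact mul_le_mul (hB i) hfle2 (abs_nonneg _) hK.le
      have hsum : (∑ _i : Fin n, K * (L * h)) = (n:ℝ) * (K * (L * h)) := by
        rw [Finset.sum_const, Finset.card_univ, Fintype.card_fin, nsmul_eq_mul]
      calc (n:ℝ)⁻¹ * |∑ i, B i ω * (f i t - f i (s j))|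
          ≤ (n:ℝ)⁻¹ * ((n:ℝ) * (K * (L * h))) := by
            rw [← hsum]
            exact mul_le_mul_of_nonneg_left hin (by positivity)
        _ = K * L * h := by field_simp
    calc |X t ω| = |X (s j) ω + (X t ω - X (s j) ω)| := by ring_nf
      _ ≤ |X (s j) ω| + |X t ω - X (s j) ω| := abs_add_le _ _
      _ ≤ 2 * (∑ l ∈ Finset.range (2*n), |X (s (l+1)) ω - X (s l) ω|) + K*L*h := by
          linarith [htel, hslack]
      _ = G ω := rfl
  show ∫ ω, (⨆ t : Set.Icc (-t₀) t₀, |X (↑t) ω|) ∂μ ≤ 5 * K * L * t₀ / Real.sqrt n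
  by_cases hF : Integrable (fun ω => ⨆ t : Set.Icc (-t₀) t₀, |X (↑t) ω|) μ
  · calc ∫ ω, (⨆ t : Set.Icc (-t₀) t₀, |X (↑t) ω|) ∂μ
        ≤ ∫ ω, G ω ∂μ := integral_mono_ae hF intG hae
      _ ≤ 5 * K * L * t₀ / Real.sqrt n := hGle
  · rw [integral_undef hF]
    apply div_nonneg _ (Real.sqrt_nonneg _)
    positivity
end
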